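/- arXiv:1206.3439 — 5 statements merged into one kernel-verified Lean document; each statement's English description precedes it below -/
import Mathlib

section
/- Let p : B → E be a pure morphism of commutative rings. If f : X → Y is a B-linear map that is the equalizer (kernel of the difference) of a parallel pair g, h : Y ⇉ Z of B-linear maps, and the pair (E ⊗[B] g, E ⊗[B] h) admits a split equalizer in Mod_E (i.e., there exist E-linear maps exhibiting the equalizer of E ⊗ g and E ⊗ h as a split equalizer), then f is a pure morphism of B-modules. -/
open TensorProduct

universe u

section Aux

variable {B : Type u} [CommRing B]

/-- `β ↦ (m ↦ (b ↦ β (b • m)))`, bundled as a `B`-linear map. -/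
def auxD1 {M : Type u} [AddCommGroup M] [Module B M] :
    CharacterModule M →ₗ[B] (M →ₗ[B] CharacterModule B) where
  toFun β :=
    { toFun := fun m => β.comp (AddMonoidHom.mk' (fun b : B => b • m)
        (fun a b => add_smul a b m))
      map_add' := fun m m' => by
        ext b
        show β (b • (m + m')) = β (b • m) + β (b • m')
        rw [smul_add, map_add]
      map_smul' := fun b₀ m => by
        ext b
        show β (b • b₀ • m) = β ((b₀ • b) • m)
        rw [smul_assoc, smul_comm] }
  map_add' β β' := by ext m b; rfl
  map_smul' b₀ β := by
    ext m b
    show β (b₀ • b • m) = β ((b₀ • b) • m)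
    rw [smul_assoc]

@[simp] lemma auxD1_apply {M : Type u} [AddCommGroup M] [Module B M]
    (β : CharacterModule M) (m : M) (b : B) :
    auxD1 β m b = β (b • m) := rfl

variable {E : Type u} [CommRing E] [Algebra B E]

/-- Extension of characters along `M → E ⊗ M` using a splitting `χ`. -/
noncomputable def auxTheta (χ : CharacterModule B →ₗ[B] CharacterModule E)
    {M : Type u} [AddCommGroup M] [Module B M] :
    CharacterModule M →ₗ[B] CharacterModule (E ⊗[B] M) :=
  (CharacterModule.dual (TensorProduct.comm B E M).toLinearMap) ∘ₗ
    CharacterModule.uncurry ∘ₗ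
      (LinearMap.llcomp B M (CharacterModule B) (CharacterModule E) χ) ∘ₗ auxD1

lemma auxTheta_tmul (χ : CharacterModule B →ₗ[B] CharacterModule E)
    {M : Type u} [AddCommGroup M] [Module B M]
    (β : CharacterModule M) (ε : E) (m : M) :
    auxTheta χ β (ε ⊗ₜ[B] m) = χ (auxD1 β m) ε := by
  have h0 : auxTheta χ β (ε ⊗ₜ[B] m)
      = CharacterModule.uncurry
          ((LinearMap.llcomp B M (CharacterModule B) (CharacterModule E) χ) (auxD1 β))
          ((TensorProduct.comm B E M) (ε ⊗ₜ[B] m)) := rfl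
  rw [h0, TensorProduct.comm_tmul, CharacterModule.uncurry_apply]
  rfl

/-- Naturality of `auxTheta`. -/
lemma auxTheta_natural (χ : CharacterModule B →ₗ[B] CharacterModule E)
    {M M' : Type u} [AddCommGroup M] [Module B M] [AddCommGroup M'] [Module B M']
    (q : M →ₗ[B] M') (β' : CharacterModule M') (v : E ⊗[B] M) :
    auxTheta χ (CharacterModule.dual q β') v = auxTheta χ β' (LinearMap.baseChange E q v) := by
  induction v with
  | zero => simp
  | tmul ε m =>
      rw [LinearMap.baseChange_tmul, auxTheta_tmul, auxTheta_tmul]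
      have hd : auxD1 (B := B) ((CharacterModule.dual q) β') m = auxD1 (B := B) β' (q m) := by
        ext b
        show β' (q (b • m)) = β' (b • q m)
        rw [q.map_smul]
      rw [hd]
  | add v w hv hw => rw [map_add, map_add, hv, hw, map_add]

lemma auxTheta_one_tmul (χ : CharacterModule B →ₗ[B] CharacterModule E)
    (hχ : ∀ (φ₀ : CharacterModule B) (b : B), χ φ₀ (algebraMap B E b) = φ₀ b)
    {M : Type u} [AddCommGroup M] [Module B M] (β : CharacterModule M) (m : M) :
    auxTheta χ β ((1 : E) ⊗ₜ[B] m) = β m := by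
  rw [auxTheta_tmul, show (1 : E) = algebraMap B E 1 from (map_one _).symm, hχ]
  show β ((1 : B) • m) = β m
  rw [one_smul]

/-- The key splitting `χ : B⋆ →ₗ[B] E⋆` coming from purity of `B → E`. -/
lemma exists_chi
    (hp : ∀ (N : Type u) [AddCommGroup N] [Module B N],
      Function.Injective (fun n : N => (n ⊗ₜ[B] (1 : E) : N ⊗[B] E))) :
    ∃ χ : CharacterModule B →ₗ[B] CharacterModule E,
      ∀ (φ₀ : CharacterModule B) (b : B), χ φ₀ (algebraMap B E b) = φ₀ b := by
  classical
  set σ : CharacterModule B →ₗ[B] (CharacterModule B) ⊗[B] E :=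
    (TensorProduct.mk B (CharacterModule B) E).flip 1 with hσdef
  have hσ : Function.Injective σ := by
    intro a b hab
    exact hp (CharacterModule B) (by simpa [hσdef] using hab)
  set ev : CharacterModule (CharacterModule B) :=
    AddMonoidHom.mk' (fun φ₀ : CharacterModule B => φ₀ 1) (fun a b => rfl) with hevdef
  obtain ⟨c, hc⟩ := CharacterModule.dual_surjective_of_injective σ hσ ev
  refine ⟨{ toFun := fun φ₀ =>
              c.comp (TensorProduct.mk B (CharacterModule B) E φ₀).toAddMonoidHom
            map_add' := ?_
            map_smul' := ?_ }, ?_⟩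
  · intro φ φ'
    ext ε
    show c ((φ + φ') ⊗ₜ[B] ε) = c (φ ⊗ₜ[B] ε) + c (φ' ⊗ₜ[B] ε)
    rw [TensorProduct.add_tmul, map_add]
  · intro b φ
    ext ε
    show c ((b • φ) ⊗ₜ[B] ε) = c (φ ⊗ₜ[B] (b • ε))
    rw [TensorProduct.smul_tmul]
  · intro φ₀ b
    show c (φ₀ ⊗ₜ[B] algebraMap B E b) = φ₀ b
    have h1 : φ₀ ⊗ₜ[B] algebraMap B E b = (b • φ₀) ⊗ₜ[B] (1 : E) := by
      rw [TensorProduct.smul_tmul, Algebra.algebraMap_eq_smul_one]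
    have h2 := DFunLike.congr_fun hc (b • φ₀)
    simp only [CharacterModule.dual_apply] at h2
    have h3 : c (σ (b • φ₀)) = ev (b • φ₀) := by
      exact h2
    rw [h1]
    have h4 : σ (b • φ₀) = (b • φ₀) ⊗ₜ[B] (1 : E) := rfl
    rw [← h4, h3]
    show φ₀ (b • (1 : B)) = φ₀ b
    rw [smul_eq_mul, mul_one]

end Aux

/-- Lemma: if `p : B → E` is pure and `f : X → Y` is the equalizer of a parallel pair
`g, h : Y ⇉ Z` of `B`-linear maps whose base change to `E` admits a split equalizer,
then `f` is a pure morphism of `B`-modules. -/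
theorem equalizer_of_split_pair_is_pure
    {B E : Type u} [CommRing B] [CommRing E] [Algebra B E]
    (hp : ∀ (N : Type u) [AddCommGroup N] [Module B N],
      Function.Injective (fun n : N => (n ⊗ₜ[B] (1 : E) : N ⊗[B] E)))
    {X Y Z : Type u} [AddCommGroup X] [Module B X] [AddCommGroup Y] [Module B Y]
    [AddCommGroup Z] [Module B Z]
    (f : X →ₗ[B] Y) (g h : Y →ₗ[B] Z)
    (hfinj : Function.Injective f)
    (hker : LinearMap.range f = LinearMap.ker (g - h))
    (hsplit : ∃ (W : Type u) (_ : AddCommGroup W) (_ : Module E W)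
        (e : W →ₗ[E] E ⊗[B] Y) (s : (E ⊗[B] Y) →ₗ[E] W)
        (t : (E ⊗[B] Z) →ₗ[E] E ⊗[B] Y),
      (LinearMap.baseChange E g).comp e = (LinearMap.baseChange E h).comp e ∧
      s.comp e = LinearMap.id ∧
      t.comp (LinearMap.baseChange E h) = LinearMap.id ∧
      t.comp (LinearMap.baseChange E g) = e.comp s) :
    ∀ (N : Type u) [AddCommGroup N] [Module B N],
      Function.Injective (LinearMap.lTensor N f) := by
  classical
  obtain ⟨W, _, _, e, s, t, hge, hse, hth, htg⟩ := hsplit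
  obtain ⟨χ, hχ⟩ := exists_chi hp
  -- `g` and `h` agree on the image of `f`
  have hgf : ∀ x, g (f x) = h (f x) := by
    intro x
    have hmem : f x ∈ LinearMap.ker (g - h) := by
      rw [← hker]; exact ⟨x, rfl⟩
    have h0 := LinearMap.mem_ker.mp hmem
    rw [LinearMap.sub_apply] at h0
    exact sub_eq_zero.mp h0
  -- the additive map `y ↦ e (s (1 ⊗ y))`
  set mA : Y →+ E ⊗[B] Y := AddMonoidHom.mk'
      (fun y => e (s ((1:E) ⊗ₜ[B] y)))
      (by intro y y'
          show e (s ((1:E) ⊗ₜ[B] (y + y')))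
            = e (s ((1:E) ⊗ₜ[B] y)) + e (s ((1:E) ⊗ₜ[B] y'))
          rw [TensorProduct.tmul_add, map_add, map_add]) with hmAdef
  have hmA_smul : ∀ (b : B) (y : Y), mA (b • y) = b • mA y := by
    intro b y
    show e (s ((1:E) ⊗ₜ[B] (b • y))) = b • e (s ((1:E) ⊗ₜ[B] y))
    rw [TensorProduct.tmul_smul, ← algebraMap_smul E b ((1:E) ⊗ₜ[B] y),
      map_smul, map_smul, algebraMap_smul]
  -- the crucial endomorphism of `Y⋆`
  set ubar : CharacterModule Y →ₗ[B] CharacterModule Y :=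
    { toFun := fun β => (auxTheta χ β).comp mA
      map_add' := by
        intro β β'
        ext y
        show auxTheta χ (β + β') (mA y) = auxTheta χ β (mA y) + auxTheta χ β' (mA y)
        rw [map_add]
        rfl
      map_smul' := by
        intro b β
        ext y
        show auxTheta χ (b • β) (mA y) = auxTheta χ β (mA (b • y))
        rw [map_smul, hmA_smul]
        rfl } with hubardef
  have hubar_apply : ∀ (β : CharacterModule Y) (y : Y),
      ubar β y = auxTheta χ β (e (s ((1:E) ⊗ₜ[B] y))) := fun β y => rfl
  -- (L1) `ubar β` agrees with `β` on the image of `f`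
  have hL1 : ∀ (β : CharacterModule Y) (x : X), ubar β (f x) = β (f x) := by
    intro β x
    have h1 : e (s ((1:E) ⊗ₜ[B] f x)) = (1:E) ⊗ₜ[B] f x := by
      have h2 := LinearMap.congr_fun htg ((1:E) ⊗ₜ[B] f x)
      have h3 := LinearMap.congr_fun hth ((1:E) ⊗ₜ[B] f x)
      simp only [LinearMap.comp_apply, LinearMap.baseChange_tmul, LinearMap.id_apply] at h2 h3
      rw [hgf] at h2
      rw [← h2, h3]
    rw [hubar_apply, h1, auxTheta_one_tmul χ hχ]
  -- (L2) `ubar` kills characters vanishing on the image of `f`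
  have hL2 : ∀ β : CharacterModule Y, CharacterModule.dual f β = 0 → ubar β = 0 := by
    intro β hβ0
    have hβf : ∀ x, β (f x) = 0 := by
      intro x
      exact DFunLike.congr_fun hβ0 x
    set K : Submodule B Y := LinearMap.ker (g - h) with hKdef
    set c' : (Y ⧸ K) →ₗ[B] Z := K.liftQ (g - h) le_rfl with hc'def
    have hc' : Function.Injective c' := by
      rw [← LinearMap.ker_eq_bot]
      exact Submodule.ker_liftQ_eq_bot _ _ _ le_rfl
    have hann : K.toAddSubgroup ≤ β.ker := by
      intro y hy
      have hyK : y ∈ K := hy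
      have hyr : y ∈ LinearMap.range f := by rw [hker]; exact hyK
      obtain ⟨x, rfl⟩ := hyr
      exact hβf x
    set βbar : CharacterModule (Y ⧸ K) := QuotientAddGroup.lift K.toAddSubgroup β hann
      with hβbardef
    obtain ⟨γ, hγ⟩ := CharacterModule.dual_surjective_of_injective c' hc' βbar
    have hβd : β = CharacterModule.dual (g - h) γ := by
      ext y
      have h1 := DFunLike.congr_fun hγ (Submodule.Quotient.mk y)
      exact (h1.trans rfl).symm
    ext y
    show auxTheta χ β (e (s ((1:E) ⊗ₜ[B] y))) = 0
    have h2 : (LinearMap.baseChange E (g - h)) (e (s ((1:E) ⊗ₜ[B] y))) = 0 := by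
      rw [LinearMap.baseChange_sub, LinearMap.sub_apply]
      have h3 := LinearMap.congr_fun hge (s ((1:E) ⊗ₜ[B] y))
      simp only [LinearMap.comp_apply] at h3
      rw [h3, sub_self]
    rw [hβd, auxTheta_natural χ (g - h) γ, h2, map_zero]
  -- a (possibly nonlinear) section of `dual f`, made linear by (L2)
  have hF : Function.Surjective (CharacterModule.dual (R := B) f) :=
    CharacterModule.dual_surjective_of_injective f hfinj
  choose pre hpre using hF
  have hFs : ∀ α : CharacterModule X, ∃ β, CharacterModule.dual f β = α :=
    fun α => ⟨pre α, hpre α⟩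
  set u₀ : CharacterModule X → CharacterModule Y := fun α => ubar (pre α) with hu₀def
  have hu₀F : ∀ β : CharacterModule Y, u₀ (CharacterModule.dual f β) = ubar β := by
    intro β
    have h0 : CharacterModule.dual f (pre (CharacterModule.dual f β) - β) = 0 := by
      rw [map_sub, hpre, sub_self]
    have h1 := hL2 _ h0
    rw [map_sub] at h1
    exact sub_eq_zero.mp h1
  have hsec : ∀ (α : CharacterModule X) (x : X), (u₀ α) (f x) = α x := by
    intro α x
    calc u₀ α (f x) = ubar (pre α) (f x) := rfl
      _ = pre α (f x) := hL1 _ _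
      _ = CharacterModule.dual f (pre α) x := rfl
      _ = α x := by rw [hpre]
  have hu₀add : ∀ α α' : CharacterModule X, u₀ (α + α') = u₀ α + u₀ α' := by
    intro α α'
    obtain ⟨β, rfl⟩ := hFs α
    obtain ⟨β', rfl⟩ := hFs α'
    rw [← map_add, hu₀F, hu₀F, hu₀F, map_add]
  have hu₀smul : ∀ (b : B) (α : CharacterModule X), u₀ (b • α) = b • u₀ α := by
    intro b α
    obtain ⟨β, rfl⟩ := hFs α
    rw [← map_smul, hu₀F, hu₀F, map_smul]
  -- conclusion
  intro N _ _
  rw [injective_iff_map_eq_zero]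
  intro a ha
  by_contra hne
  obtain ⟨φ, hφ⟩ := CharacterModule.exists_character_apply_ne_zero_of_ne_zero hne
  set αm : N → CharacterModule X :=
    fun n => φ.comp (TensorProduct.mk B N X n).toAddMonoidHom with hαmdef
  have hαadd : ∀ n n', αm (n + n') = αm n + αm n' := by
    intro n n'
    ext x
    show φ ((n + n') ⊗ₜ[B] x) = φ (n ⊗ₜ[B] x) + φ (n' ⊗ₜ[B] x)
    rw [TensorProduct.add_tmul, map_add]
  have hαsmul : ∀ (b : B) n, αm (b • n) = b • αm n := by
    intro b n
    ext x
    show φ ((b • n) ⊗ₜ[B] x) = φ (n ⊗ₜ[B] (b • x))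
    rw [TensorProduct.smul_tmul]
  set Fbig : N →+ (Y →+ AddCircle (1:ℚ)) := AddMonoidHom.mk' (fun n => u₀ (αm n))
      (by intro n n'
          show u₀ (αm (n + n')) = u₀ (αm n) + u₀ (αm n')
          rw [hαadd, hu₀add]) with hFbigdef
  set ψ : N ⊗[B] Y →+ AddCircle (1:ℚ) := TensorProduct.liftAddHom Fbig (by
    intro b n y
    show u₀ (αm (b • n)) y = u₀ (αm n) (b • y)
    rw [hαsmul, hu₀smul]
    rfl) with hψdef
  have hψf : ∀ v, ψ (LinearMap.lTensor N f v) = φ v := by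
    intro v
    induction v with
    | zero => rw [map_zero, map_zero, map_zero]
    | tmul n x =>
        rw [LinearMap.lTensor_tmul]
        show ψ (n ⊗ₜ[B] f x) = φ (n ⊗ₜ[B] x)
        rw [hψdef, TensorProduct.liftAddHom_tmul]
        show u₀ (αm n) (f x) = φ (n ⊗ₜ[B] x)
        rw [hsec]
        rfl
    | add v w hv hw => rw [map_add, map_add, hv, hw, map_add]
  have : φ a = 0 := by rw [← hψf a, ha, map_zero]
  exact hφ this
end

section
/- Let p : B → E be a pure morphism of commutative rings and let f : X → Y be an injective B-linear map whose cokernel pair (the two coprojections Y ⇉ Y ⊔_X Y into the pushout of f with itself) becomes a split pair after applying E ⊗[B] -. Then E ⊗[B] f is injective. -/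
open TensorProduct

universe u


section Aux
variable {B E : Type u} [CommRing B] [CommRing E] [Algebra B E]
variable {M M' : Type u} [AddCommGroup M] [Module B M] [AddCommGroup M'] [Module B M']

noncomputable def curryCh {B : Type u} [CommRing B] {M : Type u} [AddCommGroup M] [Module B M] :
    CharacterModule M →ₗ[B] (M →ₗ[B] CharacterModule B) where
  toFun η :=
    { toFun := fun m => AddMonoidHom.mk' (fun b => η (b • m))
        (fun b b' => by show η ((b + b') • m) = _; rw [add_smul, map_add])
      map_add' := fun m m' => by
        ext b
        show η (b • (m + m')) = η (b • m) + η (b • m')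
        rw [smul_add, map_add]
      map_smul' := fun b₀ m => by
        ext b
        show η (b • b₀ • m) = η ((b₀ • b) • m)
        rw [smul_smul, smul_eq_mul, mul_comm] }
  map_add' η η' := by ext m b; rfl
  map_smul' b₀ η := by
    ext m b
    show η (b₀ • b • m) = η ((b₀ • b) • m)
    rw [smul_smul, smul_eq_mul]

@[simp] lemma curryCh_apply {B : Type u} [CommRing B] {M : Type u} [AddCommGroup M] [Module B M]
    (η : CharacterModule M) (m : M) (b : B) :
    (curryCh η m : CharacterModule B) b = η (b • m) := rfl

lemma curryCh_natural (g : M →ₗ[B] M') (η : CharacterModule M') (m : M) :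
    curryCh (CharacterModule.dual (R := B) g η) m = curryCh (B := B) η (g m) := by
  ext b
  show η (g (b • m)) = η (b • g m)
  rw [map_smul]

/-- The character `a ⊗ m ↦ ρ (curryCh η m) a` of `E ⊗[B] M` associated to a character of `M`. -/
noncomputable def lam (ρ : CharacterModule B →ₗ[B] CharacterModule E) :
    CharacterModule M →ₗ[B] CharacterModule (E ⊗[B] M) :=
  (CharacterModule.dual (R := B) (TensorProduct.comm B E M).toLinearMap) ∘ₗ
    (CharacterModule.homEquiv (R := B) (A := M) (B := E)).toLinearMap ∘ₗ
    (LinearMap.llcomp B M (CharacterModule B) (CharacterModule E) ρ) ∘ₗ curryCh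

@[simp] lemma lam_tmul (ρ : CharacterModule B →ₗ[B] CharacterModule E)
    (η : CharacterModule M) (a : E) (m : M) :
    lam ρ η (a ⊗ₜ[B] m) = ρ (curryCh η m) a := by
  simp [lam, CharacterModule.dual, CharacterModule.homEquiv]
  erw [AddMonoidHom.comp_apply]


lemma lam_natural (ρ : CharacterModule B →ₗ[B] CharacterModule E)
    (g : M →ₗ[B] M') (η : CharacterModule M') :
    lam ρ (CharacterModule.dual (R := B) g η)
      = CharacterModule.dual (R := B) (g.baseChange E) (lam ρ η) := by
  ext v
  show _ = lam ρ η (g.baseChange E v)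
  induction v using TensorProduct.induction_on with
  | zero => simp
  | tmul a m => rw [lam_tmul, curryCh_natural, LinearMap.baseChange_tmul, lam_tmul]
  | add v w hv hw => rw [map_add, map_add, hv, hw, map_add]

lemma lam_one (ρ : CharacterModule B →ₗ[B] CharacterModule E)
    (hρ : ∀ ψ : CharacterModule B, ρ ψ (1 : E) = ψ (1 : B))
    (η : CharacterModule M) (m : M) :
    lam ρ η ((1 : E) ⊗ₜ[B] m) = η m := by
  rw [lam_tmul, hρ, curryCh_apply, one_smul]

lemma exists_rho
    (hp : ∀ (N : Type u) [AddCommGroup N] [Module B N],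
      Function.Injective (fun n : N => (n ⊗ₜ[B] (1 : E) : N ⊗[B] E))) :
    ∃ ρ : CharacterModule B →ₗ[B] CharacterModule E,
      ∀ ψ : CharacterModule B, ρ ψ (1 : E) = ψ (1 : B) := by
  classical
  set N := CharacterModule B with hN
  letI : AddCommGroup N := inferInstance
  letI : Module B N := inferInstance
  let ι : N →ₗ[B] N ⊗[B] E := (TensorProduct.mk B N E).flip 1
  have hι : Function.Injective ι := by
    have := hp N
    convert this using 1
    rfl
  let φ₀ : CharacterModule N := AddMonoidHom.mk' (fun ψ => ψ (1 : B)) (fun _ _ => rfl)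
  obtain ⟨Λ, hΛ⟩ := CharacterModule.dual_surjective_of_injective (R := B) ι hι φ₀
  refine ⟨⟨⟨fun ψ => Λ.comp ((TensorProduct.mk B N E ψ).toAddMonoidHom), ?_⟩, ?_⟩, ?_⟩
  · intro ψ ψ'
    ext a
    show Λ ((ψ + ψ') ⊗ₜ a) = Λ (ψ ⊗ₜ a) + Λ (ψ' ⊗ₜ a)
    rw [TensorProduct.add_tmul, map_add]
  · intro b ψ
    ext a
    show Λ ((b • ψ) ⊗ₜ a) = Λ (ψ ⊗ₜ (b • a))
    rw [TensorProduct.smul_tmul]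
  · intro ψ
    have : Λ (ι ψ) = φ₀ ψ := by rw [← hΛ]; rfl
    exact this

lemma homEquiv_tmul (L : M →ₗ[B] CharacterModule M') (m : M) (m' : M') :
    CharacterModule.homEquiv (R := B) L (m ⊗ₜ[B] m') = L m m' := by
  simp [CharacterModule.homEquiv]
  erw [TensorProduct.liftAddHom_tmul]

lemma homEquiv_symm_tmul (ξ : CharacterModule (M ⊗[B] M')) (m : M) (m' : M') :
    (CharacterModule.homEquiv (R := B)).symm ξ m m' = ξ (m ⊗ₜ[B] m') := by
  rfl

end Aux

/-- If `p : B → E` is pure and `f : X → Y` is an injective `B`-linear map whose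
cokernel pair becomes a split pair after applying `E ⊗[B] -`, then `E ⊗[B] f`
is injective. -/
theorem baseChange_injective_of_cokernel_pair_split
    {B E : Type u} [CommRing B] [CommRing E] [Algebra B E]
    (hp : ∀ (N : Type u) [AddCommGroup N] [Module B N],
      Function.Injective (fun n : N => (n ⊗ₜ[B] (1 : E) : N ⊗[B] E)))
    {X Y : Type u} [AddCommGroup X] [Module B X] [AddCommGroup Y] [Module B Y]
    (f : X →ₗ[B] Y) (hfinj : Function.Injective f)
    -- the cokernel pair `i₁, i₂ : Y ⇉ Y ⊔_X Y`
    (i₁ i₂ : Y →ₗ[B] ((Y × Y) ⧸ LinearMap.range (f.prod (-f))))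
    (hi₁ : i₁ = (LinearMap.range (f.prod (-f))).mkQ.comp (LinearMap.inl B Y Y))
    (hi₂ : i₂ = (LinearMap.range (f.prod (-f))).mkQ.comp (LinearMap.inr B Y Y))
    -- the pair `(E ⊗ i₁, E ⊗ i₂)` admits a split equalizer in `Mod_E`
    (hsplit : ∃ (W : Type u) (_ : AddCommGroup W) (_ : Module E W)
        (e : W →ₗ[E] E ⊗[B] Y) (s : (E ⊗[B] Y) →ₗ[E] W)
        (t : (E ⊗[B] ((Y × Y) ⧸ LinearMap.range (f.prod (-f)))) →ₗ[E] E ⊗[B] Y),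
      (LinearMap.baseChange E i₁).comp e = (LinearMap.baseChange E i₂).comp e ∧
      s.comp e = LinearMap.id ∧
      t.comp (LinearMap.baseChange E i₂) = LinearMap.id ∧
      t.comp (LinearMap.baseChange E i₁) = e.comp s) :
    Function.Injective (LinearMap.baseChange E f) := by
  classical
  obtain ⟨W, _, _, e, s, t, heq, hse, hti2, hti1⟩ := hsplit
  -- the cokernel of `f`
  set C : Type u := Y ⧸ LinearMap.range f with hCdef
  set c : Y →ₗ[B] C := (LinearMap.range f).mkQ with hcdef
  -- the map `j : C → Q`, `c y ↦ i₂ y - i₁ y`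
  have hjker : LinearMap.range f ≤ LinearMap.ker (i₂ - i₁) := by
    rintro _ ⟨x, rfl⟩
    have : (i₂ - i₁) (f x) = 0 := by
      rw [LinearMap.sub_apply, hi₁, hi₂, sub_eq_zero, LinearMap.comp_apply,
        LinearMap.comp_apply]
      rw [Submodule.mkQ_apply, Submodule.mkQ_apply, Submodule.Quotient.eq]
      exact ⟨-x, by simp⟩
    exact LinearMap.mem_ker.mpr this
  set j := Submodule.liftQ (LinearMap.range f) (i₂ - i₁) hjker with hjdef
  have hjc : ∀ y : Y, j (c y) = i₂ y - i₁ y := fun y => rfl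
  -- the map `k' : Q → C`, `mkQ (y₁, y₂) ↦ c y₂`
  have hkker : LinearMap.range (f.prod (-f)) ≤
      LinearMap.ker (c ∘ₗ LinearMap.snd B Y Y) := by
    rintro _ ⟨x, rfl⟩
    have : c (-(f x)) = 0 := by
      rw [map_neg, neg_eq_zero, hcdef, Submodule.mkQ_apply,
        Submodule.Quotient.mk_eq_zero]
      exact ⟨x, rfl⟩
    simpa [LinearMap.mem_ker] using this
  set k' := Submodule.liftQ (LinearMap.range (f.prod (-f)))
    (c ∘ₗ LinearMap.snd B Y Y) hkker with hkdef
  have hcomp1 : k' ∘ₗ i₁ = 0 := by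
    ext y
    rw [LinearMap.comp_apply, hi₁, LinearMap.comp_apply]
    show k' (Submodule.Quotient.mk (y, 0)) = 0
    show c ((y, (0 : Y)).2) = 0
    simp
  have hcomp2 : k' ∘ₗ i₂ = c := by
    ext y
    rw [LinearMap.comp_apply, hi₂, LinearMap.comp_apply]
    show k' (Submodule.Quotient.mk ((0 : Y), y)) = c y
    rfl
  -- the section `t₂` of `c.baseChange E`
  set t₂ : E ⊗[B] C →ₗ[E] E ⊗[B] Y := t ∘ₗ j.baseChange E with ht2def
  have hBce : ∀ w : W, (c.baseChange E) (e w) = 0 := by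
    intro w
    have h1 : (i₁.baseChange E) (e w) = (i₂.baseChange E) (e w) := by
      have := DFunLike.congr_fun heq w
      simpa using this
    calc (c.baseChange E) (e w)
        = ((k' ∘ₗ i₂).baseChange E) (e w) := by rw [hcomp2]
      _ = (k'.baseChange E) ((i₂.baseChange E) (e w)) := by
          rw [LinearMap.baseChange_comp]; rfl
      _ = (k'.baseChange E) ((i₁.baseChange E) (e w)) := by rw [h1]
      _ = ((k' ∘ₗ i₁).baseChange E) (e w) := by
          rw [LinearMap.baseChange_comp]; rfl
      _ = 0 := by rw [hcomp1, LinearMap.baseChange_zero]; rfl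
  have htwo : ∀ w : E ⊗[B] C, (c.baseChange E) (t₂ w) = w := by
    intro w
    induction w using TensorProduct.induction_on with
    | zero => simp
    | tmul a z =>
      obtain ⟨y, rfl⟩ := Submodule.mkQ_surjective (LinearMap.range f) z
      have e1 : t₂ (a ⊗ₜ[B] ((LinearMap.range f).mkQ y))
          = (a ⊗ₜ[B] y) - e (s (a ⊗ₜ[B] y)) := by
        show t ((j.baseChange E) (a ⊗ₜ[B] (c y))) = _
        rw [LinearMap.baseChange_tmul, hjc, TensorProduct.tmul_sub,
          ← LinearMap.baseChange_tmul (f := i₂), ← LinearMap.baseChange_tmul (f := i₁),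
          map_sub]
        have h2 := DFunLike.congr_fun hti2 (a ⊗ₜ[B] y)
        have h1 := DFunLike.congr_fun hti1 (a ⊗ₜ[B] y)
        simp only [LinearMap.comp_apply, LinearMap.id_apply] at h1 h2
        rw [h1, h2]
      show (c.baseChange E) (t₂ (a ⊗ₜ[B] ((LinearMap.range f).mkQ y))) = _
      rw [e1, map_sub, hBce, sub_zero, LinearMap.baseChange_tmul]
    | add v w hv hw => rw [map_add, map_add, hv, hw]
  -- purity gives `ρ`
  obtain ⟨ρ, hρ⟩ := exists_rho (E := E) hp
  -- the retraction `r` of `dual c`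
  set ut₂ : C →ₗ[B] E ⊗[B] Y :=
    (t₂.restrictScalars B) ∘ₗ (TensorProduct.mk B E C 1) with hut2def
  set r : CharacterModule Y →ₗ[B] CharacterModule C :=
    (CharacterModule.dual ut₂) ∘ₗ lam ρ with hrdef
  have hr : ∀ ξ : CharacterModule C, r (CharacterModule.dual (R := B) c ξ) = ξ := by
    intro ξ
    ext z
    show (lam ρ (CharacterModule.dual (R := B) c ξ)) (ut₂ z) = ξ z
    rw [lam_natural]
    show (lam ρ ξ) ((c.baseChange E) (t₂ ((1 : E) ⊗ₜ[B] z))) = ξ z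
    rw [htwo, lam_one ρ hρ]
  -- the dual of `f` and its section
  set duf : CharacterModule Y →ₗ[B] CharacterModule X :=
    CharacterModule.dual f with hdufdef
  have hsurj : Function.Surjective duf :=
    CharacterModule.dual_surjective_of_injective f hfinj
  set σt : CharacterModule Y →ₗ[B] CharacterModule Y :=
    LinearMap.id - (CharacterModule.dual c) ∘ₗ r with hstdef
  have hker : LinearMap.ker duf ≤ LinearMap.ker σt := by
    intro η hη
    have hηf : ∀ x : X, η (f x) = 0 := by
      intro x
      have h0 : duf η = 0 := LinearMap.mem_ker.mp hη
      exact DFunLike.congr_fun h0 x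
    have hle : (LinearMap.range f).restrictScalars ℤ ≤
        LinearMap.ker (η.toIntLinearMap) := by
      rintro _ ⟨x, rfl⟩
      exact hηf x
    set ξ : CharacterModule C :=
      ((Submodule.liftQ _ η.toIntLinearMap hle) ∘ₗ
        (Submodule.Quotient.restrictScalarsEquiv ℤ (LinearMap.range f)).symm.toLinearMap
        ).toAddMonoidHom with hξdef
    have hξ : CharacterModule.dual (R := B) c ξ = η := by
      ext y
      show ξ (c y) = η y
      show (Submodule.liftQ _ η.toIntLinearMap hle)
          ((Submodule.Quotient.restrictScalarsEquiv ℤ (LinearMap.range f)).symm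
            (Submodule.Quotient.mk y)) = η y
      rw [Submodule.Quotient.restrictScalarsEquiv_symm_mk, Submodule.liftQ_apply]
      rfl
    have : σt η = 0 := by
      calc σt η = CharacterModule.dual (R := B) c ξ
            - CharacterModule.dual (R := B) c (r (CharacterModule.dual (R := B) c ξ)) := by
            rw [hξ]; rfl
        _ = CharacterModule.dual (R := B) c ξ - CharacterModule.dual (R := B) c ξ := by
            rw [hr]
        _ = 0 := sub_self _
    exact LinearMap.mem_ker.mpr this
  set eqv := duf.quotKerEquivOfSurjective hsurj with heqvdef
  have heqvmk : ∀ η : CharacterModule Y, eqv (Submodule.Quotient.mk η) = duf η := by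
    intro η
    rfl
  set σ : CharacterModule X →ₗ[B] CharacterModule Y :=
    (Submodule.liftQ (LinearMap.ker duf) σt hker) ∘ₗ eqv.symm.toLinearMap with hσdef
  have hsec : ∀ η : CharacterModule Y, σ (duf η) = σt η := by
    intro η
    have h1 : eqv.symm (duf η) = Submodule.Quotient.mk η := by
      apply eqv.injective
      rw [LinearEquiv.apply_symm_apply, heqvmk]
    show (Submodule.liftQ (LinearMap.ker duf) σt hker) (eqv.symm (duf η)) = σt η
    rw [h1]
    exact Submodule.liftQ_apply _ _ _
  have hsection : ∀ (χ : CharacterModule X) (x : X), σ χ (f x) = χ x := by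
    intro χ x
    obtain ⟨η, rfl⟩ := hsurj χ
    rw [hsec]
    have hcf : c (f x) = 0 := by
      rw [hcdef, Submodule.mkQ_apply, Submodule.Quotient.mk_eq_zero]
      exact ⟨x, rfl⟩
    show η (f x) - (r η) (c (f x)) = (duf η) x
    rw [hcf, map_zero, sub_zero]
    rfl
  -- the final character chase
  rw [injective_iff_map_eq_zero]
  intro z hz
  apply CharacterModule.eq_zero_of_character_apply
  intro ξ₀
  set hg : E →ₗ[B] CharacterModule X :=
    (CharacterModule.homEquiv (R := B)).symm ξ₀ with hhgdef
  set ξ₁ : CharacterModule (E ⊗[B] Y) :=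
    CharacterModule.homEquiv (R := B) (σ ∘ₗ hg) with hξ₁def
  have hkey : ∀ w : E ⊗[B] X, ξ₁ ((f.baseChange E) w) = ξ₀ w := by
    intro w
    induction w using TensorProduct.induction_on with
    | zero => simp
    | tmul a x =>
      rw [LinearMap.baseChange_tmul, hξ₁def, homEquiv_tmul]
      show σ (hg a) (f x) = ξ₀ (a ⊗ₜ[B] x)
      rw [hsection, hhgdef, homEquiv_symm_tmul]
    | add v w hv hw => rw [map_add, map_add, map_add, hv, hw]
  have h := hkey z
  rw [hz, map_zero] at h
  exact h.symm
end

section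
/- Let U : B → A be a right adjoint functor where B is an exact (Barr-exact) category and A has kernel pairs of split epimorphisms. Then U is monadic if and only if U is conservative and U preserves those regular epimorphisms whose kernel pairs are U-split. -/
open CategoryTheory CategoryTheory.Limits

universe v₁ v₂ u₁ u₂

variable {C : Type u₁} [Category.{v₁} C]

/-- An internal equivalence relation on an object `X` of a category with pullbacks:
a jointly monic pair `p₁, p₂ : R ⇉ X` which is reflexive, symmetric and transitive. -/
structure InternalEquivRelation [HasPullbacks C] (X : C) where
  /-- the object of the relation -/
  R : C
  /-- first projection -/
  p₁ : R ⟶ X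
  /-- second projection -/
  p₂ : R ⟶ X
  jointly_mono : ∀ {W : C} (a b : W ⟶ R), a ≫ p₁ = b ≫ p₁ → a ≫ p₂ = b ≫ p₂ → a = b
  /-- reflexivity -/
  refl : X ⟶ R
  refl_p₁ : refl ≫ p₁ = 𝟙 X
  refl_p₂ : refl ≫ p₂ = 𝟙 X
  /-- symmetry -/
  symm : R ⟶ R
  symm_p₁ : symm ≫ p₁ = p₂
  symm_p₂ : symm ≫ p₂ = p₁
  /-- transitivity -/
  trans : pullback p₂ p₁ ⟶ R
  trans_p₁ : trans ≫ p₁ = pullback.fst p₂ p₁ ≫ p₁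
  trans_p₂ : trans ≫ p₂ = pullback.snd p₂ p₁ ≫ p₂

/-- A Barr-exact category: finitely complete, kernel pairs have coequalizers,
regular epimorphisms are stable under pullback, and every internal equivalence
relation is effective (i.e. is a kernel pair). -/
class BarrExact (C : Type u₁) [Category.{v₁} C] extends HasFiniteLimits C : Prop where
  hasCoeqOfKernelPair : ∀ {X Y : C} (f : X ⟶ Y),
    HasCoequalizer (pullback.fst f f) (pullback.snd f f)
  regularEpi_stable : ∀ {X Y Z : C} (f : X ⟶ Y) (g : Z ⟶ Y),
    Nonempty (RegularEpi f) → Nonempty (RegularEpi (pullback.snd f g))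
  effective : ∀ {X : C} (r : InternalEquivRelation X),
    ∃ (Y : C) (q : X ⟶ Y), IsKernelPair q r.p₁ r.p₂


section BeckCopy
open CategoryTheory CategoryTheory.Monad
/-
Copyright (c) 2020 Bhavik Mehta. All rights reserved.
Released under Apache 2.0 license as described in the file LICENSE.
Authors: Bhavik Mehta
-/





/-!
# Monadicity theorems

We prove monadicity theorems which can establish a given functor is monadic. In particular, we
show three versions of Beck's monadicity theorem, and the reflexive (crude) monadicity theorem:

`G` is a monadic right adjoint if it has a left adjoint, and:

* `D` has, `G` preserves and reflects `G`-split coequalizers, see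
  `CategoryTheory.Monad.monadicOfHasPreservesReflectsGSplitCoequalizers`
* `G` creates `G`-split coequalizers, see
  `CategoryTheory.Monad.monadicOfCreatesGSplitCoequalizers`
  (The converse of this is also shown, see
   `CategoryTheory.Monad.createsGSplitCoequalizersOfMonadic`)
* `D` has and `G` preserves `G`-split coequalizers, and `G` reflects isomorphisms, see
  `CategoryTheory.Monad.monadicOfHasPreservesGSplitCoequalizersOfReflectsIsomorphisms`
* `D` has and `G` preserves reflexive coequalizers, and `G` reflects isomorphisms, see
  `CategoryTheory.Monad.monadicOfHasPreservesReflexiveCoequalizersOfReflectsIsomorphisms`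

This file has been adapted to `Mathlib.CategoryTheory.Monad.Comonadicity`.
Please try to keep them in sync.

## Tags

Beck, monadicity, descent

-/

namespace DuskinBeck

open Limits

noncomputable section

-- Hide the implementation details in this namespace.
namespace MInt

variable {C : Type u₁} {D : Type u₂}
variable [Category.{v₁} C] [Category.{v₂} D]
variable {G : D ⥤ C} {F : C ⥤ D} (adj : F ⊣ G)

/-- The "main pair" for an algebra `(A, α)` is the pair of morphisms `(F α, ε_FA)`. It is always a
reflexive pair, and will be used to construct the left adjoint to the comparison functor and show it
is an equivalence.
-/
instance main_pair_reflexive (A : adj.toMonad.Algebra) :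
    IsReflexivePair (F.map A.a) (adj.counit.app (F.obj A.A)) := by
  apply IsReflexivePair.mk' (F.map (adj.unit.app _)) _ _
  · exact (F.map_comp _ _).symm.trans ((congr_arg F.map A.unit).trans (F.map_id _))
  · exact adj.left_triangle_components _

/-- The "main pair" for an algebra `(A, α)` is the pair of morphisms `(F α, ε_FA)`. It is always a
`G`-split pair, and will be used to construct the left adjoint to the comparison functor and show it
is an equivalence.
-/
instance main_pair_G_split (A : adj.toMonad.Algebra) :
    G.IsSplitPair (F.map A.a)
      (adj.counit.app (F.obj A.A)) where
  splittable := ⟨_, _, ⟨beckSplitCoequalizer A⟩⟩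

/-- The object function for the left adjoint to the comparison functor. -/
def comparisonLeftAdjointObj (A : adj.toMonad.Algebra)
    [HasCoequalizer (F.map A.a) (adj.counit.app _)] : D :=
  coequalizer (F.map A.a) (adj.counit.app _)

set_option linter.unusedVariables false in
/--
We have a bijection of homsets which will be used to construct the left adjoint to the comparison
functor.
-/
@[simps!]
def comparisonLeftAdjointHomEquiv (A : adj.toMonad.Algebra) (B : D)
    [HasCoequalizer (F.map A.a) (adj.counit.app (F.obj A.A))] :
    (comparisonLeftAdjointObj adj A ⟶ B) ≃ (A ⟶ (comparison adj).obj B) :=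
  calc
    (comparisonLeftAdjointObj adj A ⟶ B) ≃ { f : F.obj A.A ⟶ B // _ } :=
      Cofork.IsColimit.homIso (colimit.isColimit _) B
    _ ≃ { g : A.A ⟶ G.obj B // G.map (F.map g) ≫ G.map (adj.counit.app B) = A.a ≫ g } := by
      refine (adj.homEquiv _ _).subtypeEquiv ?_
      intro f
      rw [← (adj.homEquiv _ _).injective.eq_iff, Adjunction.homEquiv_naturality_left,
        adj.homEquiv_unit, adj.homEquiv_unit]
      erw [G.map_comp]
      dsimp
      erw [adj.right_triangle_components_assoc, ← G.map_comp, F.map_comp, Category.assoc,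
        adj.counit_naturality, adj.left_triangle_components_assoc]
      apply eq_comm
    _ ≃ (A ⟶ (comparison adj).obj B) :=
      { toFun := fun g =>
          { f := _
            h := g.prop }
        invFun := fun f => ⟨f.f, f.h⟩
        left_inv := fun g => by ext; rfl
        right_inv := fun f => by ext; rfl }

/-- Construct the adjunction to the comparison functor.
-/
def leftAdjointComparison
    [∀ A : adj.toMonad.Algebra, HasCoequalizer (F.map A.a)
      (adj.counit.app (F.obj A.A))] :
    adj.toMonad.Algebra ⥤ D := by
  refine
    Adjunction.leftAdjointOfEquiv (G := comparison adj)
      (F_obj := fun A => comparisonLeftAdjointObj adj A) (fun A B => ?_) ?_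
  · apply comparisonLeftAdjointHomEquiv
  · intro A B B' g h
    ext1
    -- Porting note: the goal was previously closed by the following, which succeeds until
    -- `Category.assoc`.
    -- dsimp [comparisonLeftAdjointHomEquiv]
    -- rw [← adj.homEquiv_naturality_right, Category.assoc]
    change adj.homEquiv _ _ (coequalizer.π _ _ ≫ h ≫ g) = adj.homEquiv _ _ (coequalizer.π _ _ ≫ h) ≫ G.map g
    exact (congr_arg (adj.homEquiv _ _) (Category.assoc _ _ _).symm).trans (adj.homEquiv_naturality_right _ _)

/-- Provided we have the appropriate coequalizers, we have an adjunction to the comparison functor.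
-/
@[simps! counit]
def comparisonAdjunction
    [∀ A : adj.toMonad.Algebra, HasCoequalizer (F.map A.a)
      (adj.counit.app (F.obj A.A))] :
    leftAdjointComparison adj ⊣ comparison adj :=
  Adjunction.adjunctionOfEquivLeft _ _

variable {adj}

theorem comparisonAdjunction_unit_f_aux
    [∀ A : adj.toMonad.Algebra, HasCoequalizer (F.map A.a)
      (adj.counit.app (F.obj A.A))]
    (A : adj.toMonad.Algebra) :
    ((comparisonAdjunction adj).unit.app A).f =
      adj.homEquiv A.A _
        (coequalizer.π (F.map A.a) (adj.counit.app (F.obj A.A))) :=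
  congr_arg (adj.homEquiv _ _) (Category.comp_id _)

/-- This is a cofork which is helpful for establishing monadicity: the morphism from the Beck
coequalizer to this cofork is the unit for the adjunction on the comparison functor.
-/
@[simps! pt]
def unitCofork (A : adj.toMonad.Algebra)
    [HasCoequalizer (F.map A.a) (adj.counit.app (F.obj A.A))] :
    Cofork (G.map (F.map A.a)) (G.map (adj.counit.app (F.obj A.A))) :=
  Cofork.ofπ (G.map (coequalizer.π (F.map A.a) (adj.counit.app (F.obj A.A))))
    (by
      change _ = G.map _ ≫ _
      exact ((G.map_comp _ _).symm.trans (congr_arg G.map (coequalizer.condition _ _))).trans (G.map_comp _ _))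

@[simp]
theorem unitCofork_π (A : adj.toMonad.Algebra)
    [HasCoequalizer (F.map A.a) (adj.counit.app (F.obj A.A))] :
    (unitCofork A).π = G.map (coequalizer.π (F.map A.a) (adj.counit.app (F.obj A.A))) :=
  rfl

theorem comparisonAdjunction_unit_f
    [∀ A : adj.toMonad.Algebra, HasCoequalizer (F.map A.a)
      (adj.counit.app (F.obj A.A))]
    (A : adj.toMonad.Algebra) :
    ((comparisonAdjunction adj).unit.app A).f = (beckCoequalizer A).desc (unitCofork A) := by
  apply Limits.Cofork.IsColimit.hom_ext (beckCoequalizer A)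
  erw [Cofork.IsColimit.π_desc]
  dsimp only [beckCofork_π, unitCofork_π]
  erw [comparisonAdjunction_unit_f_aux, ← adj.homEquiv_naturality_left A.a, coequalizer.condition,
    adj.homEquiv_naturality_right, adj.homEquiv_unit, Category.assoc]
  apply adj.right_triangle_components_assoc

variable (adj)

/-- The cofork which describes the counit of the adjunction: the morphism from the coequalizer of
this pair to this morphism is the counit.
-/
@[simps!]
def counitCofork (B : D) :
    Cofork (F.map (G.map (adj.counit.app B)))
      (adj.counit.app (F.obj (G.obj B))) :=
  Cofork.ofπ (adj.counit.app B) (adj.counit_naturality _)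

variable {adj} in
/-- The unit cofork is a colimit provided `G` preserves it. -/
def unitColimitOfPreservesCoequalizer (A : adj.toMonad.Algebra)
    [HasCoequalizer (F.map A.a) (adj.counit.app (F.obj A.A))]
    [PreservesColimit (parallelPair (F.map A.a) (adj.counit.app (F.obj A.A))) G] :
    IsColimit (unitCofork (G := G) A) :=
  isColimitOfHasCoequalizerOfPreservesColimit G _ _

/-- The counit cofork is a colimit provided `G` reflects it. -/
def counitCoequalizerOfReflectsCoequalizer (B : D)
    [ReflectsColimit (parallelPair (F.map (G.map (adj.counit.app B)))
      (adj.counit.app (F.obj (G.obj B)))) G] :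
    IsColimit (counitCofork (adj := adj) B) :=
  isColimitOfIsColimitCoforkMap G _ (beckCoequalizer ((comparison adj).obj B))

-- Porting note: Lean 3 didn't seem to need this
instance
    [∀ A : adj.toMonad.Algebra, HasCoequalizer (F.map A.a) (adj.counit.app (F.obj A.A))]
    (B : D) : HasColimit (parallelPair
      (F.map (G.map (NatTrans.app adj.counit B)))
      (NatTrans.app adj.counit (F.obj (G.obj B)))) :=
  inferInstanceAs <| HasCoequalizer
    (F.map ((comparison adj).obj B).a)
    (adj.counit.app (F.obj ((comparison adj).obj B).A))

theorem comparisonAdjunction_counit_app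
    [∀ A : adj.toMonad.Algebra, HasCoequalizer (F.map A.a) (adj.counit.app (F.obj A.A))] (B : D) :
    (comparisonAdjunction adj).counit.app B = colimit.desc _ (counitCofork adj B) := by
  apply coequalizer.hom_ext
  change
    coequalizer.π (F.map (G.map (adj.counit.app B))) (adj.counit.app (F.obj (G.obj B))) ≫ coequalizer.desc ((adj.homEquiv _ B).symm (𝟙 _)) _ =
      coequalizer.π (F.map (G.map (adj.counit.app B))) (adj.counit.app (F.obj (G.obj B))) ≫ coequalizer.desc _ _
  simp [Adjunction.homEquiv_counit]

end MInt

open CategoryTheory Adjunction Monad MInt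

variable {C : Type u₁} {D : Type u₂}
variable [Category.{v₁} C] [Category.{v₂} D]
variable {G : D ⥤ C} {F : C ⥤ D} (adj : F ⊣ G)

variable (G) in
/--
If `G` is monadic, it creates colimits of `G`-split pairs. This is the "boring" direction of Beck's
monadicity theorem, the converse is given in `monadicOfCreatesGSplitCoequalizers`.
-/
def createsGSplitCoequalizersOfMonadic [MonadicRightAdjoint G] ⦃A B⦄ (f g : A ⟶ B)
    [G.IsSplitPair f g] : CreatesColimit (parallelPair f g) G := by
  apply (config := {allowSynthFailures := true}) monadicCreatesColimitOfPreservesColimit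
    -- Porting note: oddly (config := {allowSynthFailures := true}) had no effect here and below
  all_goals
    apply @preservesColimit_of_iso_diagram _ _ _ _ _ _ _ _ _ (diagramIsoParallelPair.{v₁} _).symm ?_
    dsimp
    infer_instance

section BeckMonadicity

-- Porting note: added these to replace parametric instances https://github.com/leanprover/lean4/issues/2311
-- When this is fixed the proofs below that struggle with instances should be reviewed.
-- [∀ ⦃A B⦄ (f g : A ⟶ B) [G.IsSplitPair f g], HasCoequalizer f g]
class HasCoequalizerOfIsSplitPair (G : D ⥤ C) : Prop where
  out : ∀ {A B} (f g : A ⟶ B) [G.IsSplitPair f g], HasCoequalizer f g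

-- Porting note: cannot find synth order
-- instance {A B} (f g : A ⟶ B) [G.IsSplitPair f g] [HasCoequalizerOfIsSplitPair G] :
--     HasCoequalizer f g := HasCoequalizerOfIsSplitPair.out f g

instance [HasCoequalizerOfIsSplitPair G] : ∀ (A : Algebra adj.toMonad),
    HasCoequalizer (F.map A.a)
      (adj.counit.app (F.obj A.A)) :=
  fun _ => HasCoequalizerOfIsSplitPair.out G _ _

-- Porting note: added these to replace parametric instances https://github.com/leanprover/lean4/issues/2311
-- [∀ ⦃A B⦄ (f g : A ⟶ B) [G.IsSplitPair f g], PreservesColimit (parallelPair f g) G]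
class PreservesColimitOfIsSplitPair (G : D ⥤ C) where
  out : ∀ {A B} (f g : A ⟶ B) [G.IsSplitPair f g], PreservesColimit (parallelPair f g) G

instance {A B} (f g : A ⟶ B) [G.IsSplitPair f g] [PreservesColimitOfIsSplitPair G] :
    PreservesColimit (parallelPair f g) G := PreservesColimitOfIsSplitPair.out f g

instance [PreservesColimitOfIsSplitPair G] : ∀ (A : Algebra adj.toMonad),
   PreservesColimit (parallelPair (F.map A.a)
      (NatTrans.app adj.counit (F.obj A.A))) G :=
  fun _ => PreservesColimitOfIsSplitPair.out _ _

-- Porting note: added these to replace parametric instances https://github.com/leanprover/lean4/issues/2311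
-- [∀ ⦃A B⦄ (f g : A ⟶ B) [G.IsSplitPair f g], ReflectsColimit (parallelPair f g) G] :
class ReflectsColimitOfIsSplitPair (G : D ⥤ C) where
  out : ∀ {A B} (f g : A ⟶ B) [G.IsSplitPair f g], ReflectsColimit (parallelPair f g) G

instance {A B} (f g : A ⟶ B) [G.IsSplitPair f g] [ReflectsColimitOfIsSplitPair G] :
    ReflectsColimit (parallelPair f g) G := ReflectsColimitOfIsSplitPair.out f g

instance [ReflectsColimitOfIsSplitPair G] : ∀ (A : Algebra adj.toMonad),
    ReflectsColimit (parallelPair (F.map A.a)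
      (NatTrans.app adj.counit (F.obj A.A))) G :=
  fun _ => ReflectsColimitOfIsSplitPair.out _ _

/-- To show `G` is a monadic right adjoint, we can show it preserves and reflects `G`-split
coequalizers, and `D` has them.
-/
def monadicOfHasPreservesReflectsGSplitCoequalizers [HasCoequalizerOfIsSplitPair G]
    [PreservesColimitOfIsSplitPair G] [ReflectsColimitOfIsSplitPair G] :
    MonadicRightAdjoint G where
  L := F
  adj := adj
  eqv := by
    have : ∀ (X : Algebra adj.toMonad), IsIso ((comparisonAdjunction adj).unit.app X) := by
      intro X
      apply @isIso_of_reflects_iso _ _ _ _ _ _ _ (Monad.forget adj.toMonad) ?_ _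
      · change IsIso ((comparisonAdjunction adj).unit.app X).f
        rw [comparisonAdjunction_unit_f]
        change
          IsIso
            (IsColimit.coconePointUniqueUpToIso (beckCoequalizer X)
                (unitColimitOfPreservesCoequalizer X)).hom
        exact (IsColimit.coconePointUniqueUpToIso _ _).isIso_hom
    have : ∀ (Y : D), IsIso ((comparisonAdjunction adj).counit.app Y) := by
      intro Y
      rw [comparisonAdjunction_counit_app]
      -- Porting note: passing instances through
      change IsIso (IsColimit.coconePointUniqueUpToIso _ ?_).hom
      infer_instance
      -- Porting note: passing instances through
      apply @counitCoequalizerOfReflectsCoequalizer _ _ _ _ _ _ _ _ ?_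
      letI _ :
        G.IsSplitPair (F.map (G.map (adj.counit.app Y)))
          (adj.counit.app (F.obj (G.obj Y))) :=
        MInt.main_pair_G_split _ ((comparison adj).obj Y)
      infer_instance
    exact (comparisonAdjunction adj).toEquivalence.isEquivalence_inverse

-- Porting note: added these to replace parametric instances https://github.com/leanprover/lean4/issues/2311
-- [∀ ⦃A B⦄ (f g : A ⟶ B) [G.IsSplitPair f g], CreatesColimit (parallelPair f g) G] :
class CreatesColimitOfIsSplitPair (G : D ⥤ C) where
  out : ∀ {A B} (f g : A ⟶ B) [G.IsSplitPair f g], CreatesColimit (parallelPair f g) G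

instance {A B} (f g : A ⟶ B) [G.IsSplitPair f g] [CreatesColimitOfIsSplitPair G] :
    CreatesColimit (parallelPair f g) G := CreatesColimitOfIsSplitPair.out f g

instance [CreatesColimitOfIsSplitPair G] : ∀ (A : Algebra adj.toMonad),
    CreatesColimit (parallelPair (F.map A.a)
      (NatTrans.app adj.counit (F.obj A.A))) G :=
  fun _ => CreatesColimitOfIsSplitPair.out _ _

/--
Beck's monadicity theorem. If `G` has a left adjoint and creates coequalizers of `G`-split pairs,
then it is monadic.
This is the converse of `createsGSplitCoequalizersOfMonadic`.
-/
def monadicOfCreatesGSplitCoequalizers [CreatesColimitOfIsSplitPair G] :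
    MonadicRightAdjoint G := by
  let I {A B} (f g : A ⟶ B) [G.IsSplitPair f g] : HasColimit (parallelPair f g ⋙ G) := by
    apply @hasColimit_of_iso _ _ _ _ _ _ ?_ (diagramIsoParallelPair.{v₁} _)
    exact inferInstanceAs <| HasCoequalizer (G.map f) (G.map g)
  have : HasCoequalizerOfIsSplitPair G := ⟨fun _ _ => hasColimit_of_created (parallelPair _ _) G⟩
  have : PreservesColimitOfIsSplitPair G := ⟨by intros; infer_instance⟩
  have : ReflectsColimitOfIsSplitPair G := ⟨by intros; infer_instance⟩
  exact monadicOfHasPreservesReflectsGSplitCoequalizers adj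

/-- An alternate version of Beck's monadicity theorem. If `G` reflects isomorphisms, preserves
coequalizers of `G`-split pairs and `C` has coequalizers of `G`-split pairs, then it is monadic.
-/
def monadicOfHasPreservesGSplitCoequalizersOfReflectsIsomorphisms [G.ReflectsIsomorphisms]
    [HasCoequalizerOfIsSplitPair G] [PreservesColimitOfIsSplitPair G] :
    MonadicRightAdjoint G := by
  have : ReflectsColimitOfIsSplitPair G := ⟨fun f g _ => by
    have := HasCoequalizerOfIsSplitPair.out G f g
    apply reflectsColimit_of_reflectsIsomorphisms⟩
  apply monadicOfHasPreservesReflectsGSplitCoequalizers adj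

end BeckMonadicity

section ReflexiveMonadicity

variable [HasReflexiveCoequalizers D] [G.ReflectsIsomorphisms]

-- Porting note: added these to replace parametric instances https://github.com/leanprover/lean4/issues/2311
-- [∀ ⦃A B⦄ (f g : A ⟶ B) [G.IsReflexivePair f g], PreservesColimit (parallelPair f g) G] :
class PreservesColimitOfIsReflexivePair (G : C ⥤ D) where
  out : ∀ ⦃A B⦄ (f g : A ⟶ B) [IsReflexivePair f g], PreservesColimit (parallelPair f g) G

instance {A B} (f g : A ⟶ B) [IsReflexivePair f g] [PreservesColimitOfIsReflexivePair G] :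
  PreservesColimit (parallelPair f g) G := PreservesColimitOfIsReflexivePair.out f g

instance [PreservesColimitOfIsReflexivePair G] : ∀ X : Algebra adj.toMonad,
    PreservesColimit (parallelPair (F.map X.a)
      (NatTrans.app adj.counit (F.obj X.A))) G :=
 fun _ => PreservesColimitOfIsReflexivePair.out _ _

variable [PreservesColimitOfIsReflexivePair G]

/-- Reflexive (crude) monadicity theorem. If `G` has a right adjoint, `D` has and `G` preserves
reflexive coequalizers and `G` reflects isomorphisms, then `G` is monadic.
-/
def monadicOfHasPreservesReflexiveCoequalizersOfReflectsIsomorphisms : MonadicRightAdjoint G where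
  L := F
  adj := adj
  eqv := by
    haveI : ∀ A : adj.toMonad.Algebra, HasCoequalizer (F.map A.a) (adj.counit.app (F.obj A.A)) :=
      fun A => @HasReflexiveCoequalizers.has_coeq D _ _ _ _ _ _ (main_pair_reflexive adj A)
    have : ∀ (X : Algebra adj.toMonad), IsIso ((comparisonAdjunction adj).unit.app X) := by
      intro X
      apply
        @isIso_of_reflects_iso _ _ _ _ _ _ _ (Monad.forget adj.toMonad) ?_ _
      · change IsIso ((comparisonAdjunction adj).unit.app X).f
        rw [comparisonAdjunction_unit_f]
        exact (IsColimit.coconePointUniqueUpToIso (beckCoequalizer X)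
          (unitColimitOfPreservesCoequalizer X)).isIso_hom
    have : ∀ (Y : D), IsIso ((comparisonAdjunction adj).counit.app Y) := by
      intro Y
      rw [comparisonAdjunction_counit_app]
      -- Porting note: passing instances through
      change IsIso (IsColimit.coconePointUniqueUpToIso _ ?_).hom
      infer_instance
      -- Porting note: passing instances through
      apply @counitCoequalizerOfReflectsCoequalizer _ _ _ _ _ _ _ _ ?_
      apply reflectsColimit_of_reflectsIsomorphisms
    exact (comparisonAdjunction adj).toEquivalence.isEquivalence_inverse

end ReflexiveMonadicity

end

end DuskinBeck


end BeckCopy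

namespace Duskin

open CategoryTheory CategoryTheory.Limits

section

variable {A : Type u₁} {B : Type u₂} [Category.{v₁} A] [Category.{v₂} B] [BarrExact B]

instance hasCoeqKP {W YY : B} (c : W ⟶ YY) :
    HasCoequalizer (pullback.fst c c) (pullback.snd c c) :=
  BarrExact.hasCoeqOfKernelPair c

/-- In a Barr-exact category, the canonical comparison from the coequalizer of the kernel
pair of `c` to the codomain of `c` is a monomorphism. -/
theorem mono_desc {W YY : B} (c : W ⟶ YY) :
    Mono (coequalizer.desc c (pullback.condition (f := c) (g := c))) := by
  set e := coequalizer.π (pullback.fst c c) (pullback.snd c c) with he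
  set m := coequalizer.desc c (pullback.condition (f := c) (g := c)) with hm
  have hem : e ≫ m = c := coequalizer.π_desc _ _
  constructor
  intro V x y hxy
  obtain ⟨re1⟩ := BarrExact.regularEpi_stable e x ⟨coequalizerRegular _ _⟩
  obtain ⟨re2⟩ := BarrExact.regularEpi_stable e (pullback.snd e x ≫ y) ⟨coequalizerRegular _ _⟩
  haveI := RegularEpi.epi _ re1; haveI := RegularEpi.epi _ re2
  set π₁ := pullback.fst e x with hπ₁
  set π₂ := pullback.snd e x with hπ₂
  set ρ₁ := pullback.fst e (π₂ ≫ y) with hρ₁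
  set ρ₂ := pullback.snd e (π₂ ≫ y) with hρ₂
  have hπ : π₁ ≫ e = π₂ ≫ x := pullback.condition
  have hρ : ρ₁ ≫ e = ρ₂ ≫ (π₂ ≫ y) := pullback.condition
  have hv : (ρ₂ ≫ π₁) ≫ c = ρ₁ ≫ c :=
    calc (ρ₂ ≫ π₁) ≫ c = ρ₂ ≫ (π₁ ≫ e) ≫ m := by simp only [Category.assoc, hem]
      _ = ρ₂ ≫ (π₂ ≫ x) ≫ m := by rw [hπ]
      _ = ρ₂ ≫ (π₂ ≫ y) ≫ m := by simp only [Category.assoc, hxy]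
      _ = (ρ₁ ≫ e) ≫ m := by rw [hρ]; simp only [Category.assoc]
      _ = ρ₁ ≫ c := by simp only [Category.assoc, hem]
  have h1 : (ρ₂ ≫ π₁) ≫ e = ρ₁ ≫ e := by
    have h2 := pullback.lift _ _ hv ≫= coequalizer.condition (pullback.fst c c) (pullback.snd c c)
    rwa [← Category.assoc, pullback.lift_fst, ← Category.assoc, pullback.lift_snd] at h2
  have h3 : ρ₂ ≫ π₂ ≫ x = ρ₂ ≫ π₂ ≫ y :=
    calc ρ₂ ≫ π₂ ≫ x = ρ₂ ≫ π₁ ≫ e := by rw [hπ]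
      _ = (ρ₂ ≫ π₁) ≫ e := by rw [Category.assoc]
      _ = ρ₁ ≫ e := h1
      _ = ρ₂ ≫ π₂ ≫ y := by rw [hρ]
  exact (cancel_epi _).1 ((cancel_epi _).1 h3)

end

section Factor

variable {A : Type u₁} {B : Type u₂} [Category.{v₁} A] [Category.{v₂} B] [BarrExact B]
variable (U : B ⥤ A) [U.IsRightAdjoint] [U.ReflectsIsomorphisms]

/-- Conservativity lets us factor a morphism through a monomorphism as soon as we can
do so after applying `U`. -/
theorem factor_through {R YY V : B} (m : R ⟶ YY) [Mono m] (θ : V ⟶ YY)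
    (χ : U.obj V ⟶ U.obj R) (hχ : χ ≫ U.map m = U.map θ) :
    ∃ ρ : V ⟶ R, ρ ≫ m = θ := by
  have LD := isLimitOfHasPullbackOfPreservesLimit U m θ
  haveI : IsSplitEpi (U.map (pullback.snd m θ)) :=
    ⟨⟨⟨PullbackCone.IsLimit.lift LD χ (𝟙 _) (by simpa using hχ),
       PullbackCone.IsLimit.lift_snd LD χ (𝟙 _) (by simpa using hχ)⟩⟩⟩
  haveI : IsIso (U.map (pullback.snd m θ)) := isIso_of_mono_of_isSplitEpi _
  haveI : IsIso (pullback.snd m θ) := isIso_of_reflects_iso _ U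
  refine ⟨inv (pullback.snd m θ) ≫ pullback.fst m θ, ?_⟩
  rw [Category.assoc, pullback.condition, IsIso.inv_hom_id_assoc]



/-- A pair of morphisms that forms a kernel pair has a coequalizer in a Barr-exact category. -/
theorem hasCoequalizer_of_isKernelPair {R' Y' Q' : B} (q₀ : Y' ⟶ Q') {p₁ p₂ : R' ⟶ Y'}
    (h : IsKernelPair q₀ p₁ p₂) : HasCoequalizer p₁ p₂ := by
  haveI := BarrExact.hasCoeqOfKernelPair q₀
  exact hasColimit_of_iso (F := parallelPair (pullback.fst q₀ q₀) (pullback.snd q₀ q₀))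
    (parallelPair.ext h.isoPullback (Iso.refl _)
      (by simp [h.isoPullback_hom_fst]) (by simp [h.isoPullback_hom_snd]))

/-- The heart of Duskin's monadicity theorem: a `U`-split pair has a coequalizer in `B`,
and this coequalizer is preserved by `U`. -/
theorem key
    (hpres : ∀ ⦃X Y : B⦄ (f : X ⟶ Y), Nonempty (RegularEpi f) →
      U.IsSplitPair (pullback.fst f f) (pullback.snd f f) → Nonempty (RegularEpi (U.map f)))
    (hA : ∀ {X Y : A} (f : X ⟶ Y), IsSplitEpi f → HasPullback f f)
    {X Y : B} (f g : X ⟶ Y) [hsplit : U.IsSplitPair f g] :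
    HasCoequalizer f g ∧ PreservesColimit (parallelPair f g) U := by
  obtain ⟨Z, q, ⟨sp⟩⟩ := hsplit.splittable
  obtain ⟨s, t, hcond, hsq, htg, htf⟩ := sp
  set c : pullback f f ⟶ Y ⨯ Y :=
    prod.lift (pullback.fst f f ≫ g) (pullback.snd f f ≫ g) with hc
  have hcfst : c ≫ prod.fst = pullback.fst f f ≫ g := prod.lift_fst _ _
  have hcsnd : c ≫ prod.snd = pullback.snd f f ≫ g := prod.lift_snd _ _
  obtain ⟨R, e, m, hem, hmono, hre, hEpi, hdesc⟩ :
      ∃ (R : B) (e : pullback f f ⟶ R) (m : R ⟶ Y ⨯ Y), e ≫ m = c ∧ Mono m ∧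
        Nonempty (RegularEpi e) ∧ Epi e ∧
        ∀ {V : B} (h : pullback f f ⟶ V),
          pullback.fst c c ≫ h = pullback.snd c c ≫ h → ∃ d, e ≫ d = h := by
    refine ⟨coequalizer (pullback.fst c c) (pullback.snd c c), coequalizer.π _ _,
      coequalizer.desc c pullback.condition, coequalizer.π_desc _ _, mono_desc c,
      ⟨coequalizerRegular _ _⟩, inferInstance, fun h hh => ⟨coequalizer.desc h hh, coequalizer.π_desc _ _⟩⟩
  haveI := hmono
  obtain ⟨p₁, p₂, hp₁, hp₂⟩ :
      ∃ (p₁ p₂ : R ⟶ Y), p₁ = m ≫ prod.fst ∧ p₂ = m ≫ prod.snd := ⟨_, _, rfl, rfl⟩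
  have hep₁ : e ≫ p₁ = pullback.fst f f ≫ g := by
    rw [hp₁, ← Category.assoc, hem, hcfst]
  have hep₂ : e ≫ p₂ = pullback.snd f f ≫ g := by
    rw [hp₂, ← Category.assoc, hem, hcsnd]
  -- the kernel pair of `q` in `A`
  haveI : IsSplitEpi q := ⟨⟨⟨s, hsq⟩⟩⟩
  haveI : HasPullback q q := hA q inferInstance
  have hwgq : U.map (pullback.fst f f ≫ g) ≫ q = U.map (pullback.snd f f ≫ g) ≫ q := by
    rw [U.map_comp, U.map_comp, Category.assoc, Category.assoc, ← hcond,
      ← Functor.map_comp_assoc, ← Functor.map_comp_assoc, pullback.condition]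
  have LW := isLimitOfHasPullbackOfPreservesLimit U f f
  have LYY := isLimitOfHasBinaryProductOfPreservesLimit U Y Y
  have hσpf : (pullback.fst q q ≫ t) ≫ U.map f = (pullback.snd q q ≫ t) ≫ U.map f := by
    rw [Category.assoc, Category.assoc, htf, pullback.condition_assoc]
  obtain ⟨σ, hσ1, hσ2⟩ :
      ∃ σ : (pullback q q : A) ⟶ U.obj (pullback f f),
        σ ≫ U.map (pullback.fst f f) = pullback.fst q q ≫ t ∧
          σ ≫ U.map (pullback.snd f f) = pullback.snd q q ≫ t :=
    ⟨PullbackCone.IsLimit.lift LW _ _ hσpf,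
      PullbackCone.IsLimit.lift_fst LW _ _ hσpf,
      PullbackCone.IsLimit.lift_snd LW _ _ hσpf⟩
  have hσg1 : σ ≫ U.map (pullback.fst f f ≫ g) = pullback.fst q q := by
    rw [U.map_comp, reassoc_of% hσ1, htg, Category.comp_id]
  have hσg2 : σ ≫ U.map (pullback.snd f f ≫ g) = pullback.snd q q := by
    rw [U.map_comp, reassoc_of% hσ2, htg, Category.comp_id]
  obtain ⟨d, hd1, hd2⟩ :
      ∃ d : U.obj (pullback f f) ⟶ (pullback q q : A),
        d ≫ pullback.fst q q = U.map (pullback.fst f f ≫ g) ∧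
          d ≫ pullback.snd q q = U.map (pullback.snd f f ≫ g) :=
    ⟨pullback.lift _ _ hwgq, pullback.lift_fst _ _ _, pullback.lift_snd _ _ _⟩
  have hσd : σ ≫ d = 𝟙 _ := by
    apply pullback.hom_ext
    · rw [Category.assoc, hd1, hσg1, Category.id_comp]
    · rw [Category.assoc, hd2, hσg2, Category.id_comp]
  have hρpf : (U.map (pullback.fst f f) ≫ U.map g ≫ t) ≫ U.map f =
      (U.map (pullback.snd f f) ≫ U.map g ≫ t) ≫ U.map f := by
    simp only [Category.assoc, htf]
    rw [← reassoc_of% hcond, ← Functor.map_comp_assoc, ← Functor.map_comp_assoc,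
      pullback.condition]
  obtain ⟨ρ, hρ1, hρ2⟩ :
      ∃ ρ : U.obj (pullback f f) ⟶ U.obj (pullback f f),
        ρ ≫ U.map (pullback.fst f f) = U.map (pullback.fst f f) ≫ U.map g ≫ t ∧
          ρ ≫ U.map (pullback.snd f f) = U.map (pullback.snd f f) ≫ U.map g ≫ t :=
    ⟨PullbackCone.IsLimit.lift LW _ _ hρpf,
      PullbackCone.IsLimit.lift_fst LW _ _ hρpf,
      PullbackCone.IsLimit.lift_snd LW _ _ hρpf⟩
  have hρc : ρ ≫ U.map c = U.map c := by
    apply BinaryFan.IsLimit.hom_ext LYY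
    · change (ρ ≫ U.map c) ≫ U.map prod.fst = U.map c ≫ U.map prod.fst
      simp only [BinaryFan.mk_fst, Category.assoc, ← Functor.map_comp, hcfst]
      rw [U.map_comp, reassoc_of% hρ1, htg, Category.comp_id]
    · change (ρ ≫ U.map c) ≫ U.map prod.snd = U.map c ≫ U.map prod.snd
      simp only [BinaryFan.mk_snd, Category.assoc, ← Functor.map_comp, hcsnd]
      rw [U.map_comp, reassoc_of% hρ2, htg, Category.comp_id]
  have hρe : ρ ≫ U.map e = U.map e := by
    rw [← cancel_mono (U.map m), Category.assoc, ← U.map_comp, hem]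
    exact hρc
  have hρe' : ρ ≫ U.map e = 𝟙 _ ≫ U.map e := by rw [hρe, Category.id_comp]
  have Lke := isLimitOfHasPullbackOfPreservesLimit U e e
  obtain ⟨ℓ, hℓ1, hℓ2⟩ :
      ∃ ℓ : U.obj (pullback f f) ⟶ U.obj (pullback e e),
        ℓ ≫ U.map (pullback.fst e e) = ρ ∧ ℓ ≫ U.map (pullback.snd e e) = 𝟙 _ :=
    ⟨PullbackCone.IsLimit.lift Lke _ _ hρe',
      PullbackCone.IsLimit.lift_fst Lke _ _ hρe',
      PullbackCone.IsLimit.lift_snd Lke _ _ hρe'⟩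
  have hρdσ : ρ = d ≫ σ := by
    apply PullbackCone.IsLimit.hom_ext LW
    · simp only [PullbackCone.mk_fst]
      change ρ ≫ U.map (pullback.fst f f) = (d ≫ σ) ≫ U.map (pullback.fst f f)
      rw [hρ1, Category.assoc, hσ1, reassoc_of% hd1]
      simp [Functor.map_comp]
    · simp only [PullbackCone.mk_snd]
      change ρ ≫ U.map (pullback.snd f f) = (d ≫ σ) ≫ U.map (pullback.snd f f)
      rw [hρ2, Category.assoc, hσ2, reassoc_of% hd2]
      simp [Functor.map_comp]
  have hkeB1 : pullback.fst e e ≫ pullback.fst f f ≫ g =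
      pullback.snd e e ≫ pullback.fst f f ≫ g := by
    rw [← hep₁, pullback.condition_assoc]
  have hkeB2 : pullback.fst e e ≫ pullback.snd f f ≫ g =
      pullback.snd e e ≫ pullback.snd f f ≫ g := by
    rw [← hep₂, pullback.condition_assoc]
  have hspe : U.IsSplitPair (pullback.fst e e) (pullback.snd e e) := by
    refine ⟨⟨pullback q q, d, ⟨⟨σ, ℓ, ?_, hσd, hℓ2, ?_⟩⟩⟩⟩
    · apply pullback.hom_ext
      · rw [Category.assoc, hd1, Category.assoc, hd1, ← U.map_comp, ← U.map_comp, hkeB1]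
      · rw [Category.assoc, hd2, Category.assoc, hd2, ← U.map_comp, ← U.map_comp, hkeB2]
    · rw [hℓ1, hρdσ]
  obtain ⟨hUe⟩ := hpres e hre hspe
  haveI := RegularEpi.epi _ hUe
  have Upq : U.map p₁ ≫ q = U.map p₂ ≫ q := by
    rw [← cancel_epi (U.map e), ← Functor.map_comp_assoc, hep₁,
      ← Functor.map_comp_assoc, hep₂, hwgq]
  -- factoring through `m`
  have hfact : ∀ (V : B) (θ : V ⟶ Y ⨯ Y) (lθ : U.obj V ⟶ (pullback q q : A)),
      lθ ≫ pullback.fst q q = U.map (θ ≫ prod.fst) →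
      lθ ≫ pullback.snd q q = U.map (θ ≫ prod.snd) →
      ∃ ρV : V ⟶ R, ρV ≫ m = θ := by
    intro V θ lθ h1 h2
    apply factor_through U m θ (lθ ≫ σ ≫ U.map e)
    apply BinaryFan.IsLimit.hom_ext LYY
    · change ((lθ ≫ σ ≫ U.map e) ≫ U.map m) ≫ U.map prod.fst = U.map θ ≫ U.map prod.fst
      simp only [BinaryFan.mk_fst, Category.assoc, ← Functor.map_comp]
      rw [show e ≫ m ≫ prod.fst = pullback.fst f f ≫ g by rw [← hp₁, hep₁], hσg1, h1]
    · change ((lθ ≫ σ ≫ U.map e) ≫ U.map m) ≫ U.map prod.snd = U.map θ ≫ U.map prod.snd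
      simp only [BinaryFan.mk_snd, Category.assoc, ← Functor.map_comp]
      rw [show e ≫ m ≫ prod.snd = pullback.snd f f ≫ g by rw [← hp₂, hep₂], hσg2, h2]
  -- reflexivity
  obtain ⟨rf, hrf⟩ := hfact Y (prod.lift (𝟙 Y) (𝟙 Y))
    (pullback.lift (𝟙 _) (𝟙 _) rfl) (by simp [prod.lift_fst, pullback.lift_fst]) (by simp [prod.lift_snd, pullback.lift_snd])
  have hrf1 : rf ≫ p₁ = 𝟙 Y := by
    have h := hrf =≫ prod.fst
    rwa [Category.assoc, prod.lift_fst, ← hp₁] at h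
  have hrf2 : rf ≫ p₂ = 𝟙 Y := by
    have h := hrf =≫ prod.snd
    rwa [Category.assoc, prod.lift_snd, ← hp₂] at h
  -- the factorization of ⟨f, g⟩
  obtain ⟨ρX, hρX⟩ := hfact X (prod.lift f g)
    (pullback.lift (U.map f) (U.map g) hcond) (by simp [prod.lift_fst, pullback.lift_fst]) (by simp [prod.lift_snd, pullback.lift_snd])
  have hρX1 : ρX ≫ p₁ = f := by
    have h := hρX =≫ prod.fst
    rwa [Category.assoc, prod.lift_fst, ← hp₁] at h
  have hρX2 : ρX ≫ p₂ = g := by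
    have h := hρX =≫ prod.snd
    rwa [Category.assoc, prod.lift_snd, ← hp₂] at h
  -- symmetry
  have hswc : pullback.lift (pullback.snd f f) (pullback.fst f f) pullback.condition.symm ≫ c =
      c ≫ prod.lift prod.snd prod.fst := by
    apply Limits.prod.hom_ext <;> simp [hcfst, hcsnd, prod.lift_fst, prod.lift_snd, pullback.lift_fst_assoc, pullback.lift_snd_assoc]
  have hswe : pullback.fst c c ≫
        pullback.lift (pullback.snd f f) (pullback.fst f f) pullback.condition.symm ≫ e =
      pullback.snd c c ≫
        pullback.lift (pullback.snd f f) (pullback.fst f f) pullback.condition.symm ≫ e := by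
    rw [← cancel_mono m]
    simp only [Category.assoc, hem, hswc]
    rw [pullback.condition_assoc]
  obtain ⟨sy, hsy⟩ := hdesc _ hswe
  have hsy1 : sy ≫ p₁ = p₂ := by
    rw [← cancel_epi e, reassoc_of% hsy, hep₁, pullback.lift_fst_assoc, hep₂]
  have hsy2 : sy ≫ p₂ = p₁ := by
    rw [← cancel_epi e, reassoc_of% hsy, hep₂, pullback.lift_snd_assoc, hep₁]
  -- transitivity
  have htpf : U.map (pullback.fst p₂ p₁ ≫ p₁) ≫ q = U.map (pullback.snd p₂ p₁ ≫ p₂) ≫ q :=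
    calc U.map (pullback.fst p₂ p₁ ≫ p₁) ≫ q
        = U.map (pullback.fst p₂ p₁ ≫ p₂) ≫ q := by
          rw [U.map_comp, U.map_comp, Category.assoc, Category.assoc, Upq]
      _ = U.map (pullback.snd p₂ p₁ ≫ p₁) ≫ q := by rw [pullback.condition]
      _ = U.map (pullback.snd p₂ p₁ ≫ p₂) ≫ q := by
          rw [U.map_comp, U.map_comp, Category.assoc, Category.assoc, Upq]
  obtain ⟨tr, htr⟩ := hfact (pullback p₂ p₁)
    (prod.lift (pullback.fst p₂ p₁ ≫ p₁) (pullback.snd p₂ p₁ ≫ p₂))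
    (pullback.lift _ _ htpf) (by simp [prod.lift_fst, pullback.lift_fst]) (by simp [prod.lift_snd, pullback.lift_snd])
  have htr1 : tr ≫ p₁ = pullback.fst p₂ p₁ ≫ p₁ := by
    have h := htr =≫ prod.fst
    rwa [Category.assoc, prod.lift_fst, ← hp₁] at h
  have htr2 : tr ≫ p₂ = pullback.snd p₂ p₁ ≫ p₂ := by
    have h := htr =≫ prod.snd
    rwa [Category.assoc, prod.lift_snd, ← hp₂] at h
  -- the equivalence relation and its quotient
  have hjm : ∀ {W' : B} (a b : W' ⟶ R), a ≫ p₁ = b ≫ p₁ → a ≫ p₂ = b ≫ p₂ → a = b := by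
    intro W' a b h1 h2
    rw [← cancel_mono m]
    apply Limits.prod.hom_ext
    · rw [Category.assoc, Category.assoc, ← hp₁, h1]
    · rw [Category.assoc, Category.assoc, ← hp₂, h2]
  obtain ⟨Q₀, q₀, hq₀⟩ := BarrExact.effective
    (⟨R, p₁, p₂, hjm, rf, hrf1, hrf2, sy, hsy1, hsy2, tr, htr1, htr2⟩ :
      InternalEquivRelation Y)
  have hq₀' : IsKernelPair q₀ p₁ p₂ := hq₀
  haveI : HasCoequalizer p₁ p₂ := hasCoequalizer_of_isKernelPair q₀ hq₀'
  have hke' : IsKernelPair (coequalizer.π p₁ p₂) p₁ p₂ :=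
    IsKernelPair.cancel_right (coequalizer.condition p₁ p₂)
      (show IsKernelPair (coequalizer.π p₁ p₂ ≫ coequalizer.desc q₀ hq₀'.w) p₁ p₂ by
        rwa [coequalizer.π_desc])
  have hι1 : hke'.isoPullback.hom ≫ pullback.fst (coequalizer.π p₁ p₂) (coequalizer.π p₁ p₂) = p₁ :=
    hke'.isoPullback_hom_fst
  have hι2 : hke'.isoPullback.hom ≫ pullback.snd (coequalizer.π p₁ p₂) (coequalizer.π p₁ p₂) = p₂ :=
    hke'.isoPullback_hom_snd
  have hpb1 : pullback.fst (coequalizer.π p₁ p₂) (coequalizer.π p₁ p₂) =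
      hke'.isoPullback.inv ≫ p₁ := ((Iso.inv_comp_eq _).2 hι1.symm).symm
  have hpb2 : pullback.snd (coequalizer.π p₁ p₂) (coequalizer.π p₁ p₂) =
      hke'.isoPullback.inv ≫ p₂ := ((Iso.inv_comp_eq _).2 hι2.symm).symm
  have hℓ₀pf : (q ≫ s) ≫ q = 𝟙 _ ≫ q := by
    rw [Category.assoc, hsq, Category.comp_id, Category.id_comp]
  obtain ⟨ℓ₀, hℓ₀1, hℓ₀2⟩ :
      ∃ ℓ₀ : U.obj Y ⟶ (pullback q q : A),
        ℓ₀ ≫ pullback.fst q q = q ≫ s ∧ ℓ₀ ≫ pullback.snd q q = 𝟙 _ :=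
    ⟨pullback.lift _ _ hℓ₀pf, pullback.lift_fst _ _ _, pullback.lift_snd _ _ _⟩
  have hℓR1 : (ℓ₀ ≫ σ ≫ U.map e) ≫ U.map p₁ = q ≫ s := by
    simp only [Category.assoc, ← Functor.map_comp]
    rw [hep₁, hσg1, hℓ₀1]
  have hℓR2 : (ℓ₀ ≫ σ ≫ U.map e) ≫ U.map p₂ = 𝟙 _ := by
    simp only [Category.assoc, ← Functor.map_comp]
    rw [hep₂, hσg2, hℓ₀2]
  have hspe' : U.IsSplitPair (pullback.fst (coequalizer.π p₁ p₂) (coequalizer.π p₁ p₂))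
      (pullback.snd (coequalizer.π p₁ p₂) (coequalizer.π p₁ p₂)) := by
    refine ⟨⟨Z, q, ⟨⟨s, (ℓ₀ ≫ σ ≫ U.map e) ≫ U.map hke'.isoPullback.hom, ?_, hsq, ?_, ?_⟩⟩⟩⟩
    · rw [hpb1, hpb2, U.map_comp, U.map_comp, Category.assoc, Category.assoc, Upq]
    · rw [Category.assoc, ← U.map_comp, hι2, hℓR2]
    · rw [Category.assoc, ← U.map_comp, hι1, hℓR1]
  obtain ⟨hUe'⟩ := hpres (coequalizer.π p₁ p₂) ⟨coequalizerRegular _ _⟩ hspe'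
  haveI := RegularEpi.epi _ hUe'
  have hfg : f ≫ coequalizer.π p₁ p₂ = g ≫ coequalizer.π p₁ p₂ := by
    rw [← hρX1, ← hρX2, Category.assoc, Category.assoc, coequalizer.condition]
  -- the coequalizer in `B`
  have hd0 : ∀ s0 : Cofork f g, p₁ ≫ s0.π = p₂ ≫ s0.π := by
    intro s0
    rw [← cancel_epi e, reassoc_of% hep₁, reassoc_of% hep₂, ← s0.condition,
      pullback.condition_assoc]
  have LB : IsColimit (Cofork.ofπ (coequalizer.π p₁ p₂) hfg) := by
    refine Cofork.IsColimit.mk _ (fun s0 => coequalizer.desc s0.π (hd0 s0)) (fun s0 => ?_)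
      (fun s0 n hn => ?_)
    · simp only [Cofork.π_ofπ]
      exact coequalizer.π_desc _ _
    · have hn' : coequalizer.π p₁ p₂ ≫ n = s0.π := by simpa using hn
      exact coequalizer.hom_ext (f := p₁) (g := p₂) (by rw [coequalizer.π_desc]; exact hn')
  -- `U` maps it to a coequalizer in `A`
  have hUkp : IsKernelPair (U.map (coequalizer.π p₁ p₂)) (U.map p₁) (U.map p₂) := hke'.map U
  have LUe' : IsColimit (Cofork.ofπ (U.map (coequalizer.π p₁ p₂)) hUkp.w) := hUkp.toCoequalizer hUe'
  have spc : IsSplitCoequalizer (U.map f) (U.map g) q := ⟨s, t, hcond, hsq, htg, htf⟩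
  have Lq : IsColimit spc.asCofork := spc.isCoequalizer
  have hwZ : U.map (coequalizer.π p₁ p₂) ≫ Cofork.IsColimit.desc LUe' q Upq = q := by
    simpa using Cofork.IsColimit.π_desc' LUe' q Upq
  have wUfg : U.map f ≫ U.map (coequalizer.π p₁ p₂) =
      U.map g ≫ U.map (coequalizer.π p₁ p₂) := by
    rw [← U.map_comp, ← U.map_comp, hfg]
  have LA : IsColimit (Cofork.ofπ (U.map (coequalizer.π p₁ p₂)) wUfg) := by
    refine Cofork.IsColimit.mk _
      (fun s0 => Cofork.IsColimit.desc LUe' q Upq ≫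
        Cofork.IsColimit.desc Lq s0.π s0.condition) (fun s0 => ?_) (fun s0 n hn => ?_)
    · have h := Cofork.IsColimit.π_desc' Lq s0.π s0.condition
      simp only [IsSplitCoequalizer.asCofork_π] at h
      simp only [Cofork.π_ofπ]
      erw [← Category.assoc, hwZ, h]
    · have h := Cofork.IsColimit.π_desc' Lq s0.π s0.condition
      simp only [IsSplitCoequalizer.asCofork_π] at h
      simp only [Cofork.π_ofπ] at hn
      rw [← cancel_epi (U.map (coequalizer.π p₁ p₂)), hn]
      erw [← Category.assoc, hwZ, h]
  exact ⟨⟨⟨⟨_, LB⟩⟩⟩,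
    preservesColimit_of_preserves_colimit_cocone LB
      ((isColimitMapCoconeCoforkEquiv U hfg).symm LA)⟩

end Factor

end Duskin


/-- Duskin's theorem (variation): a right adjoint `U : B ⥤ A` from a Barr-exact
category to a category with kernel pairs of split epimorphisms is monadic iff
it is conservative and preserves regular epimorphisms with `U`-split kernel pairs. -/
theorem monadic_iff_conservative_and_preserves_regularEpis
    {A : Type u₁} {B : Type u₂} [Category.{v₁} A] [Category.{v₂} B]
    [BarrExact B]
    (hA : ∀ {X Y : A} (f : X ⟶ Y), IsSplitEpi f → HasPullback f f)
    (U : B ⥤ A) [U.IsRightAdjoint] :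
    Nonempty (MonadicRightAdjoint U) ↔
      (U.ReflectsIsomorphisms ∧
        ∀ ⦃X Y : B⦄ (f : X ⟶ Y), Nonempty (RegularEpi f) →
          U.IsSplitPair (pullback.fst f f) (pullback.snd f f) →
          Nonempty (RegularEpi (U.map f))) := by
  constructor
  · rintro ⟨M⟩
    haveI := M
    haveI := M.eqv
    constructor
    · constructor
      intro X' Y' φ hiso
      haveI : IsIso ((Monad.comparison M.adj ⋙ Monad.forget M.adj.toMonad).map φ) := by
        rw [NatIso.isIso_map_iff (Monad.comparisonForget M.adj) φ]
        exact hiso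
      haveI : IsIso ((Monad.forget M.adj.toMonad).map ((Monad.comparison M.adj).map φ)) := ‹_›
      haveI : IsIso ((Monad.comparison M.adj).map φ) :=
        isIso_of_reflects_iso _ (Monad.forget M.adj.toMonad)
      exact isIso_of_reflects_iso φ (Monad.comparison M.adj)
    · intro X' Y' f hre hsp
      obtain ⟨hre⟩ := hre
      haveI := RegularEpi.epi _ hre
      haveI := hsp
      haveI : CreatesColimit (parallelPair (pullback.fst f f) (pullback.snd f f)) U :=
        DuskinBeck.createsGSplitCoequalizersOfMonadic U _ _
      haveI : HasColimit (parallelPair (pullback.fst f f) (pullback.snd f f) ⋙ U) := by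
        apply @hasColimit_of_iso _ _ _ _ _ _ ?_ (diagramIsoParallelPair _)
        change HasCoequalizer (U.map (pullback.fst f f)) (U.map (pullback.snd f f))
        infer_instance
      haveI : PreservesColimit (parallelPair (pullback.fst f f) (pullback.snd f f)) U := by
        infer_instance
      have hkp : IsKernelPair f (pullback.fst f f) (pullback.snd f f) :=
        IsPullback.of_hasPullback f f
      have LA := isColimitCoforkMapOfIsColimit U hkp.w (hkp.toCoequalizer hre)
      exact ⟨⟨U.obj (pullback f f), U.map (pullback.fst f f), U.map (pullback.snd f f), _, LA⟩⟩
  · rintro ⟨hcon, hpres⟩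
    haveI := hcon
    haveI : DuskinBeck.HasCoequalizerOfIsSplitPair U :=
      ⟨fun f' g' h => haveI := h; (Duskin.key U hpres hA f' g').1⟩
    haveI : DuskinBeck.PreservesColimitOfIsSplitPair U :=
      ⟨fun f' g' h => haveI := h; (Duskin.key U hpres hA f' g').2⟩
    exact ⟨DuskinBeck.monadicOfHasPreservesGSplitCoequalizersOfReflectsIsomorphisms
      (Adjunction.ofIsRightAdjoint U)⟩
end

section
/- Let p : B → E be a pure ring homomorphism such that the functor E ⊗[B] - : B-Alg → B-Alg on commutative B-algebras preserves all equalizers. Then E is a flat B-module. -/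
open TensorProduct

set_option maxHeartbeats 1000000
set_option synthInstance.maxHeartbeats 400000

/-- If `p : B → E` is pure and the functor `E ⊗[B] -` on commutative `B`-algebras
preserves all equalizers, then `E` is a flat `B`-module. -/
theorem flat_of_pure_of_preserves_algebra_equalizers
    {B E : Type u} [CommRing B] [CommRing E] [Algebra B E]
    (hp : ∀ (N : Type u) [AddCommGroup N] [Module B N],
      Function.Injective (fun n : N => (n ⊗ₜ[B] (1 : E) : N ⊗[B] E)))
    (hpres : ∀ (Y Z : Type u) [CommRing Y] [CommRing Z] [Algebra B Y] [Algebra B Z]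
      (g h : Y →ₐ[B] Z),
      Function.Injective
          (Algebra.TensorProduct.map (AlgHom.id B E) (AlgHom.equalizer g h).val) ∧
        (Algebra.TensorProduct.map (AlgHom.id B E) (AlgHom.equalizer g h).val).range =
          AlgHom.equalizer (Algebra.TensorProduct.map (AlgHom.id B E) g)
            (Algebra.TensorProduct.map (AlgHom.id B E) h)) :
    Module.Flat B E := by
  rw [Module.Flat.iff_lTensor_injective']
  intro I
  -- square-zero extensions
  set Y := TrivSqZeroExt B B
  set Z := TrivSqZeroExt B (B ⧸ I)
  let g : Y →ₐ[B] Z := TrivSqZeroExt.map (I.mkQ)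
  let h : Y →ₐ[B] Z := TrivSqZeroExt.map 0
  obtain ⟨hinj, -⟩ := hpres Y Z g h
  set S := AlgHom.equalizer g h with hS
  have memS : ∀ y : Y, y ∈ S ↔ TrivSqZeroExt.snd y ∈ I := by
    intro y
    constructor
    · intro hy
      have := congrArg TrivSqZeroExt.snd hy
      rw [show g = TrivSqZeroExt.map (I.mkQ) from rfl,
        show h = TrivSqZeroExt.map 0 from rfl,
        TrivSqZeroExt.snd_map, TrivSqZeroExt.snd_map] at this
      simp only [Submodule.mkQ_apply, LinearMap.zero_apply] at this
      rwa [Submodule.Quotient.mk_eq_zero] at this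
    · intro hy
      have hfst : TrivSqZeroExt.fst (g y) = TrivSqZeroExt.fst (h y) := by
        rw [show g = TrivSqZeroExt.map (I.mkQ) from rfl,
          show h = TrivSqZeroExt.map 0 from rfl,
          TrivSqZeroExt.fst_map, TrivSqZeroExt.fst_map]
      have hsnd : TrivSqZeroExt.snd (g y) = TrivSqZeroExt.snd (h y) := by
        rw [show g = TrivSqZeroExt.map (I.mkQ) from rfl,
          show h = TrivSqZeroExt.map 0 from rfl,
          TrivSqZeroExt.snd_map, TrivSqZeroExt.snd_map]
        simp only [Submodule.mkQ_apply, LinearMap.zero_apply]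
        rwa [Submodule.Quotient.mk_eq_zero]
      exact TrivSqZeroExt.ext hfst hsnd
  -- linear inclusion of I into S
  let α : I →ₗ[B] S :=
    { toFun := fun i => ⟨TrivSqZeroExt.inr (i : B), (memS _).2 (by simpa using i.2)⟩
      map_add' := fun a b => Subtype.ext <| by
        show TrivSqZeroExt.inr ((a : B) + (b : B))
          = TrivSqZeroExt.inr (a : B) + TrivSqZeroExt.inr (b : B)
        exact map_add (TrivSqZeroExt.inrHom B B) (a : B) (b : B)
      map_smul' := fun c a => Subtype.ext <| by
        show TrivSqZeroExt.inr (c • (a : B)) = c • TrivSqZeroExt.inr (a : B)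
        exact map_smul (TrivSqZeroExt.inrHom B B) c (a : B) }
  -- linear retraction of α
  let π : S →ₗ[B] I :=
    { toFun := fun s => ⟨TrivSqZeroExt.snd (s : Y), (memS _).1 s.2⟩
      map_add' := fun a b => Subtype.ext <| by
        show TrivSqZeroExt.snd ((a : Y) + (b : Y))
          = TrivSqZeroExt.snd (a : Y) + TrivSqZeroExt.snd (b : Y)
        exact map_add (TrivSqZeroExt.sndHom B B) (a : Y) (b : Y)
      map_smul' := fun c a => Subtype.ext <| by
        show TrivSqZeroExt.snd (c • (a : Y)) = c • TrivSqZeroExt.snd (a : Y)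
        exact map_smul (TrivSqZeroExt.sndHom B B) c (a : Y) }
  have hπα : ∀ i : I, π (α i) = i := by intro i; ext; simp [α, π]
  intro x y hxy
  suffices hinj' : Function.Injective (LinearMap.lTensor E I.subtype) by exact hinj' hxy
  clear hxy x y
  have key : ∀ x : E ⊗[B] I,
      (Algebra.TensorProduct.map (AlgHom.id B E) S.val) (LinearMap.lTensor E α x)
        = LinearMap.lTensor E ((TrivSqZeroExt.inrHom B B) ∘ₗ I.subtype) x := by
    intro x
    induction x using TensorProduct.induction_on with
    | zero => simp
    | tmul e i => simp [α]
    | add a b ha hb => simp [map_add, ha, hb]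
  intro x y hxy
  have h1 : (Algebra.TensorProduct.map (AlgHom.id B E) S.val) (LinearMap.lTensor E α x)
      = (Algebra.TensorProduct.map (AlgHom.id B E) S.val) (LinearMap.lTensor E α y) := by
    rw [key, key]
    have : LinearMap.lTensor E ((TrivSqZeroExt.inrHom B B) ∘ₗ I.subtype)
        = (LinearMap.lTensor E (TrivSqZeroExt.inrHom B B)) ∘ₗ (LinearMap.lTensor E I.subtype) :=
      (LinearMap.lTensor_comp E _ _)
    rw [this]
    simp [hxy]
  have h2 : LinearMap.lTensor E α x = LinearMap.lTensor E α y := hinj h1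
  have h3 : (LinearMap.lTensor E π) (LinearMap.lTensor E α x)
      = (LinearMap.lTensor E π) (LinearMap.lTensor E α y) := by rw [h2]
  rwa [← LinearMap.lTensor_comp_apply, ← LinearMap.lTensor_comp_apply,
    show π ∘ₗ α = LinearMap.id from LinearMap.ext hπα, LinearMap.lTensor_id,
    LinearMap.id_apply, LinearMap.id_apply] at h3
end

section
/- Let D be a directed poset and suppose a B-linear map p : B → E is the directed colimit of B-linear maps p_d : B → E_d (with identity on the source) where each p_d is a split monomorphism of B-modules. Then for any parallel pair g, h : Y ⇉ Z of B-linear maps, the equalizer of (g, h) maps by a pure monomorphism into the colimit over d of the equalizers of (E_d ⊗[B] g, E_d ⊗[B] h), provided the comparison maps are the canonical ones. -/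
set_option maxHeartbeats 1000000
set_option synthInstance.maxHeartbeats 400000


open TensorProduct

/-- If `p : B → E` is the directed colimit of split monomorphisms `p_d : B → E_d` of
`B`-modules, then for any parallel pair `g, h : Y ⇉ Z` of `B`-linear maps, the canonical
comparison map from the equalizer `ker (g - h)` to the directed colimit of the equalizers
`ker (E_d ⊗ g - E_d ⊗ h)` is a pure monomorphism. -/
theorem canonical_map_to_limit_of_equalizers_is_pure
    {B : Type u} [CommRing B] {ι : Type u} [Preorder ι] [IsDirected ι (· ≤ ·)]
    [DecidableEq ι] [Nonempty ι]
    {E : ι → Type u} [∀ i, AddCommGroup (E i)] [∀ i, Module B (E i)]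
    (e : ∀ i j, i ≤ j → E i →ₗ[B] E j) [DirectedSystem E fun i j h => e i j h]
    -- the split monomorphisms `p_d : B → E_d`, compatible with the transition maps
    (p : ∀ i, B →ₗ[B] E i) (hpe : ∀ i j (hij : i ≤ j), (e i j hij).comp (p i) = p j)
    (q : ∀ i, E i →ₗ[B] B) (hq : ∀ i, (q i).comp (p i) = LinearMap.id)
    {Y Z : Type u} [AddCommGroup Y] [Module B Y] [AddCommGroup Z] [Module B Z]
    (g h : Y →ₗ[B] Z)
    -- the directed system of equalizers `K_d = ker (E_d ⊗ g - E_d ⊗ h)`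
    (tK : ∀ i j, i ≤ j →
      LinearMap.ker (LinearMap.lTensor (E i) g - LinearMap.lTensor (E i) h) →ₗ[B]
        LinearMap.ker (LinearMap.lTensor (E j) g - LinearMap.lTensor (E j) h))
    (htK : ∀ i j (hij : i ≤ j)
        (x : LinearMap.ker (LinearMap.lTensor (E i) g - LinearMap.lTensor (E i) h)),
      ((tK i j hij x : E j ⊗[B] Y)) = LinearMap.rTensor Y (e i j hij) (x : E i ⊗[B] Y))
    [DirectedSystem
      (fun i => LinearMap.ker (LinearMap.lTensor (E i) g - LinearMap.lTensor (E i) h))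
      fun i j h' => tK i j h']
    -- membership of the canonical elements in the equalizers
    (hmem : ∀ (i : ι) (x : LinearMap.ker (g - h)),
      (p i 1) ⊗ₜ[B] (x : Y) ∈
        LinearMap.ker (LinearMap.lTensor (E i) g - LinearMap.lTensor (E i) h))
    -- the canonical comparison map
    (s : LinearMap.ker (g - h) →ₗ[B] Module.DirectLimit
      (fun i => LinearMap.ker (LinearMap.lTensor (E i) g - LinearMap.lTensor (E i) h)) tK)
    (hs : ∀ (i : ι) (x : LinearMap.ker (g - h)),
      s x = Module.DirectLimit.of B ι
        (fun i => LinearMap.ker (LinearMap.lTensor (E i) g - LinearMap.lTensor (E i) h))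
        tK i ⟨(p i 1) ⊗ₜ[B] (x : Y), hmem i x⟩) :
    (∀ (N : Type u) [AddCommGroup N] [Module B N],
      Function.Injective (LinearMap.lTensor N s)) ∧ Function.Injective s := by
  classical
  let K := fun i => LinearMap.ker (LinearMap.lTensor (E i) g - LinearMap.lTensor (E i) h)
  -- the canonical section `x ↦ p_i(1) ⊗ x` into each equalizer
  let σ : ∀ i, LinearMap.ker (g - h) →ₗ[B] K i := fun i =>
    LinearMap.codRestrict (K i)
      ((TensorProduct.mk B (E i) Y (p i 1)).comp (LinearMap.ker (g - h)).subtype)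
      (fun x => hmem i x)
  have hσapp : ∀ i (x : LinearMap.ker (g - h)),
      σ i x = ⟨(p i 1) ⊗ₜ[B] (x : Y), hmem i x⟩ := fun i x => rfl
  -- the retractions
  let F : ∀ j, (E j ⊗[B] Y) →ₗ[B] Y := fun j =>
    (TensorProduct.lid B Y).toLinearMap ∘ₗ LinearMap.rTensor Y (q j)
  have hF : ∀ j (k : E j ⊗[B] Y), k ∈ K j → (g - h) (F j k) = 0 := by
    intro j k hk
    have hcomp : (g - h) ∘ₗ F j
        = (TensorProduct.lid B Z).toLinearMap ∘ₗ (LinearMap.rTensor Z (q j)) ∘ₗ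
          (LinearMap.lTensor (E j) g - LinearMap.lTensor (E j) h) := by
      apply TensorProduct.ext'
      intro a y
      simp [F, TensorProduct.tmul_sub, smul_sub]
    have := congrArg (fun f : E j ⊗[B] Y →ₗ[B] Z => f k) hcomp
    simp only [LinearMap.coe_comp, Function.comp_apply] at this
    rw [this, LinearMap.mem_ker.mp hk]
    simp
  let ρ : ∀ j, K j →ₗ[B] LinearMap.ker (g - h) := fun j =>
    LinearMap.codRestrict _ ((F j) ∘ₗ (K j).subtype)
      (fun k => LinearMap.mem_ker.mpr (hF j (k : E j ⊗[B] Y) k.2))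
  have hρσ : ∀ j, (ρ j) ∘ₗ (σ j) = LinearMap.id := by
    intro j
    refine LinearMap.ext fun x => Subtype.ext ?_
    show F j ((p j 1) ⊗ₜ[B] (x : Y)) = (x : Y)
    have h1 : q j (p j 1) = 1 := by
      have := congrArg (fun f : B →ₗ[B] B => f 1) (hq j)
      simpa using this
    simp [F, h1]
  -- compatibility of the sections with the transition maps
  have hσcomp : ∀ i j (hij : i ≤ j), (tK i j hij) ∘ₗ σ i = σ j := by
    intro i j hij
    refine LinearMap.ext fun x => Subtype.ext ?_
    rw [LinearMap.comp_apply, hσapp, hσapp, htK i j hij]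
    have h1 : e i j hij (p i 1) = p j 1 := by
      have := congrArg (fun f : B →ₗ[B] E j => f 1) (hpe i j hij)
      simpa using this
    simp [h1]
  have pure : ∀ (N : Type u) [AddCommGroup N] [Module B N],
      Function.Injective (LinearMap.lTensor N s) := by
    intro N _ _
    haveI : DirectedSystem (fun i => N ⊗[B] K i)
        (fun i j h' => LinearMap.lTensor N (tK i j h')) := by
      constructor
      · intro i x
        have h1 : tK i i le_rfl = LinearMap.id :=
          LinearMap.ext fun y =>
            DirectedSystem.map_self (f := fun i j h' => tK i j h') y
        rw [h1, LinearMap.lTensor_id, LinearMap.id_apply]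
      · intro k j i hij hjk x
        have h1 : (tK j k hjk) ∘ₗ (tK i j hij) = tK i k (hij.trans hjk) :=
          LinearMap.ext fun y =>
            DirectedSystem.map_map (f := fun i j h' => tK i j h') hij hjk y
        rw [← h1, LinearMap.lTensor_comp, LinearMap.comp_apply]
    rw [injective_iff_map_eq_zero]
    intro t ht
    obtain ⟨i0⟩ := ‹Nonempty ι›
    set ψ := TensorProduct.directLimitRight tK N with hψ
    have key : ∀ i : ι, (ψ : _ →ₗ[B] _) ∘ₗ LinearMap.lTensor N s
        = (Module.DirectLimit.of B ι (fun i => N ⊗[B] K i)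
            (fun i j h' => LinearMap.lTensor N (tK i j h')) i) ∘ₗ
          LinearMap.lTensor N (σ i) := by
      intro i
      apply TensorProduct.ext'
      intro n x
      simp only [LinearMap.coe_comp, Function.comp_apply, LinearMap.lTensor_tmul,
        LinearEquiv.coe_coe]
      rw [hs i x, ← hσapp]
      exact TensorProduct.directLimitRight_tmul_of tK N n (σ i x)
    have h0 : Module.DirectLimit.of B ι (fun i => N ⊗[B] K i)
        (fun i j h' => LinearMap.lTensor N (tK i j h')) i0
        (LinearMap.lTensor N (σ i0) t) = 0 := by
      have := congrArg (fun f : _ →ₗ[B] _ => f t) (key i0)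
      simp only [LinearMap.coe_comp, Function.comp_apply] at this
      rw [← this, ht, map_zero]
    obtain ⟨j, hij, hj0⟩ := Module.DirectLimit.of.zero_exact h0
    have hzero : LinearMap.lTensor N (σ j) t = 0 := by
      calc LinearMap.lTensor N (σ j) t
          = LinearMap.lTensor N ((tK i0 j hij) ∘ₗ σ i0) t := by rw [hσcomp]
        _ = LinearMap.lTensor N (tK i0 j hij) (LinearMap.lTensor N (σ i0) t) := by
            rw [LinearMap.lTensor_comp, LinearMap.comp_apply]
        _ = 0 := hj0
    have := congrArg (LinearMap.lTensor N (ρ j)) hzero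
    rwa [← LinearMap.comp_apply, ← LinearMap.lTensor_comp, hρσ, LinearMap.lTensor_id,
      LinearMap.id_apply, map_zero] at this
  refine ⟨pure, ?_⟩
  rw [injective_iff_map_eq_zero]
  intro x hx
  have h1 : LinearMap.lTensor B s ((1:B) ⊗ₜ[B] x) = 0 := by
    rw [LinearMap.lTensor_tmul, hx, TensorProduct.tmul_zero]
  have h2 : (1:B) ⊗ₜ[B] x = (0 : B ⊗[B] _) := pure B (by rw [h1, map_zero])
  have := congrArg (TensorProduct.lid B _) h2
  simpa using this
end
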